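/- arXiv:1802.01989 — 7 statements merged into one kernel-verified Lean document; each statement's English description precedes it below -/
import Mathlib

section
/- For a nonnegative n×n matrix A, the quantity max over all cycles (i_1, ..., i_k) of the geometric mean (a_{i_1 i_2} a_{i_2 i_3} ⋯ a_{i_k i_1})^{1/k} equals max_{1 ≤ m ≤ n} (tr_⊕ A^m)^{1/m}, where tr_⊕ denotes the maximum of diagonal entries and powers are taken in the max-times algebra. -/
open scoped BigOperators

noncomputable def mtMulMat {n : ℕ} (A B : Matrix (Fin n) (Fin n) ℝ) :
    Matrix (Fin n) (Fin n) ℝ :=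
  fun i j => ⨆ k, A i k * B k j

noncomputable def mtMulVec {n : ℕ} (A : Matrix (Fin n) (Fin n) ℝ) (x : Fin n → ℝ) :
    Fin n → ℝ :=
  fun i => ⨆ j, A i j * x j

noncomputable def mtPow {n : ℕ} (A : Matrix (Fin n) (Fin n) ℝ) : ℕ → Matrix (Fin n) (Fin n) ℝ
  | 0 => fun i j => if i = j then 1 else 0
  | m + 1 => mtMulMat (mtPow A m) A

noncomputable def mtTrace {n : ℕ} (A : Matrix (Fin n) (Fin n) ℝ) : ℝ := ⨆ i, A i i

noncomputable def mtTr {n : ℕ} (A : Matrix (Fin n) (Fin n) ℝ) : ℝ :=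
  ⨆ m : Fin n, mtTrace (mtPow A (m.1 + 1))

noncomputable def kleeneStar {n : ℕ} (A : Matrix (Fin n) (Fin n) ℝ) :
    Matrix (Fin n) (Fin n) ℝ :=
  fun i j => ⨆ m : Fin n, mtPow A m.1 i j

noncomputable def cycleMean {n : ℕ} (A : Matrix (Fin n) (Fin n) ℝ) (c : List (Fin n)) : ℝ :=
  (((c.zip (c.rotate 1)).map (fun p => A p.1 p.2)).prod) ^ ((1 : ℝ) / c.length)

noncomputable def specRad {n : ℕ} (A : Matrix (Fin n) (Fin n) ℝ) : ℝ :=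
  sSup {r : ℝ | ∃ c : List (Fin n), c ≠ [] ∧ c.length ≤ n ∧ r = cycleMean A c}

/-- weight of a walk -/
noncomputable def WW {n : ℕ} (A : Matrix (Fin n) (Fin n) ℝ) (l : List (Fin n)) : ℝ :=
  ((l.zip l.tail).map (fun p => A p.1 p.2)).prod

variable {n : ℕ} {A : Matrix (Fin n) (Fin n) ℝ}

lemma WW_single (i : Fin n) : WW A [i] = 1 := by simp [WW]

lemma WW_cons (i j : Fin n) (l : List (Fin n)) :
    WW A (i :: j :: l) = A i j * WW A (j :: l) := by simp [WW]

lemma WW_nonneg (hA : ∀ i j, 0 ≤ A i j) (l : List (Fin n)) : 0 ≤ WW A l := by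
  match l with
  | [] => simp [WW]
  | [i] => simp [WW]
  | i :: j :: l => rw [WW_cons]; exact mul_nonneg (hA i j) (WW_nonneg hA (j :: l))

lemma WW_append_last (l : List (Fin n)) (h : l ≠ []) (j : Fin n) :
    WW A (l ++ [j]) = WW A l * A (l.getLast h) j := by
  match l with
  | [i] => simp [WW_single, WW_cons]
  | i :: k :: l =>
    rw [List.cons_append, List.cons_append, WW_cons, ← List.cons_append,
      WW_append_last (k :: l) (by simp) j, WW_cons]
    simp [mul_assoc]

lemma mtPow_nonneg (hA : ∀ i j, 0 ≤ A i j) (m : ℕ) (i j : Fin n) :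
    0 ≤ mtPow A m i j := by
  match m with
  | 0 => simp [mtPow]; positivity
  | m + 1 =>
    exact Real.iSup_nonneg fun k => mul_nonneg (mtPow_nonneg hA m i k) (hA k j)

lemma mtPow_succ (m : ℕ) (i j : Fin n) :
    mtPow A (m + 1) i j = ⨆ k, mtPow A m i k * A k j := rfl

lemma WW_le_mtPow (hA : ∀ i j, 0 ≤ A i j) (l : List (Fin n)) (i j : Fin n)
    (hj : (i :: l).getLast (by simp) = j) :
    WW A (i :: l) ≤ mtPow A l.length i j := by
  induction l using List.reverseRecOn generalizing j with
  | nil => simp at hj; subst hj; simp [WW_single, mtPow]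
  | append_singleton l k ih =>
    have hj' : k = j := by
      rw [← hj]; exact (List.getLast_append_singleton (i :: l)).symm
    subst hj'
    rw [← List.cons_append, WW_append_last (i :: l) (by simp) k]
    set j' := (i :: l).getLast (by simp)
    calc WW A (i :: l) * A j' k ≤ mtPow A l.length i j' * A j' k := by
          exact mul_le_mul_of_nonneg_right (ih j' rfl) (hA j' k)
      _ ≤ ⨆ q, mtPow A l.length i q * A q k :=
          le_ciSup (f := fun q => mtPow A l.length i q * A q k)
            (Finite.bddAbove_range _) j'
      _ = mtPow A (l ++ [k]).length i k := by
          rw [List.length_append]; rfl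

lemma iSup_attained [Nonempty (Fin n)] (f : Fin n → ℝ) : ∃ k, (⨆ i, f i) = f k := by
  obtain ⟨k, hk⟩ := Finite.exists_max f
  exact ⟨k, le_antisymm (ciSup_le hk) (le_ciSup (Finite.bddAbove_range f) k)⟩

lemma exists_walk (hn : 0 < n) (hA : ∀ i j, 0 ≤ A i j) (m : ℕ) (i j : Fin n) :
    mtPow A m i j = 0 ∨
      ∃ l : List (Fin n), l.length = m ∧ (i :: l).getLast (by simp) = j ∧
        WW A (i :: l) = mtPow A m i j := by
  haveI : Nonempty (Fin n) := ⟨⟨0, hn⟩⟩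
  match m with
  | 0 =>
    by_cases h : i = j
    · subst h; right; exact ⟨[], rfl, rfl, by simp [WW_single, mtPow]⟩
    · left; simp [mtPow, h]
  | m + 1 =>
    obtain ⟨k, hk⟩ := iSup_attained (fun k => mtPow A m i k * A k j)
    rw [mtPow_succ, hk]
    rcases exists_walk hn hA m i k with h0 | ⟨l, hl, hlast, hW⟩
    · left; simp [h0]
    · right
      refine ⟨l ++ [j], by simp [hl], ?_, ?_⟩
      · exact List.getLast_append_singleton (i :: l)
      · rw [← List.cons_append, WW_append_last (i :: l) (by simp) j, hW, hlast]

lemma cycleProd_eq (a : Fin n) (t : List (Fin n)) :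
    (((a :: t).zip ((a :: t).rotate 1)).map (fun p => A p.1 p.2)).prod
      = WW A ((a :: t) ++ [a]) := by
  have hrot : (a :: t).rotate 1 = t ++ [a] := by
    rw [List.rotate_cons_succ, List.rotate_zero]
  unfold WW
  rw [hrot]
  congr 2
  have h2 := List.zip_append (l₁ := a :: t) (r₁ := [a]) (l₂ := t ++ [a])
    (r₂ := ([] : List (Fin n))) (by simp)
  simpa using h2.symm

theorem stmt3 {n : ℕ} (hn : 0 < n) (A : Matrix (Fin n) (Fin n) ℝ)
    (hA : ∀ i j, 0 ≤ A i j) :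
    specRad A = ⨆ m : Fin n, (mtTrace (mtPow A (m.1 + 1))) ^ ((1 : ℝ) / (m.1 + 1)) := by
  haveI : Nonempty (Fin n) := ⟨⟨0, hn⟩⟩
  set S := {r : ℝ | ∃ c : List (Fin n), c ≠ [] ∧ c.length ≤ n ∧ r = cycleMean A c} with hS
  set R := ⨆ m : Fin n, (mtTrace (mtPow A (m.1 + 1))) ^ ((1 : ℝ) / (m.1 + 1)) with hR
  have key : ∀ r ∈ S, r ≤ R := by
    rintro r ⟨c, hc, hlen, rfl⟩
    match c with
    | a :: t =>
      have hk : t.length + 1 ≤ n := by simpa using hlen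
      have h1 : WW A ((a :: t) ++ [a]) ≤ mtPow A (t.length + 1) a a := by
        have hL := WW_le_mtPow hA (t ++ [a]) a a
          (List.getLast_append_singleton (a :: t))
        simpa using hL
      have h2 : mtPow A (t.length + 1) a a ≤ mtTrace (mtPow A (t.length + 1)) :=
        le_ciSup (f := fun i => mtPow A (t.length + 1) i i) (Finite.bddAbove_range _) a
      have hmean : cycleMean A (a :: t)
          ≤ (mtTrace (mtPow A (t.length + 1))) ^ ((1 : ℝ) / (t.length + 1)) := by
        unfold cycleMean
        rw [cycleProd_eq]
        have hexp : ((1 : ℝ) / ((a :: t).length : ℝ)) = (1 : ℝ) / ((t.length : ℝ) + 1) := by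
          push_cast [List.length_cons]; ring_nf
        rw [hexp]
        exact Real.rpow_le_rpow (WW_nonneg hA _) (h1.trans h2) (by positivity)
      refine hmean.trans ?_
      have hlt : t.length < n := hk
      have := le_ciSup
        (f := fun m : Fin n => (mtTrace (mtPow A (m.1 + 1))) ^ ((1 : ℝ) / (m.1 + 1)))
        (Finite.bddAbove_range _) ⟨t.length, hlt⟩
      rw [hR]
      simpa [one_div] using this
  have hone : cycleMean A [⟨0, hn⟩] ∈ S := ⟨[⟨0, hn⟩], by simp, by simpa using Nat.one_le_iff_ne_zero.mpr hn.ne', rfl⟩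
  have hSne : S.Nonempty := ⟨_, hone⟩
  have hbdd : BddAbove S := ⟨R, key⟩
  have hspec0 : (0 : ℝ) ≤ specRad A := by
    have h0 : (0 : ℝ) ≤ cycleMean A [⟨0, hn⟩] := by
      apply Real.rpow_nonneg
      apply List.prod_nonneg
      intro x hx
      simp only [List.mem_map] at hx
      obtain ⟨p, _, rfl⟩ := hx
      exact hA _ _
    exact h0.trans (le_csSup hbdd hone)
  apply le_antisymm
  · exact csSup_le hSne key
  · apply ciSup_le
    intro m
    obtain ⟨i0, hi0⟩ := iSup_attained (fun i => mtPow A (m.1 + 1) i i)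
    have htr : mtTrace (mtPow A (m.1 + 1)) = mtPow A (m.1 + 1) i0 i0 := hi0
    rcases exists_walk hn hA (m.1 + 1) i0 i0 with h0 | ⟨l, hl, hlast, hW⟩
    · rw [htr, h0, Real.zero_rpow (by positivity)]
      exact hspec0
    · have hlne : l ≠ [] := by intro h; simp [h] at hl
      have hlast' : l.getLast hlne = i0 := by
        rw [← hlast, List.getLast_cons hlne]
      have hcl : (i0 :: l.dropLast) ++ [i0] = i0 :: l := by
        rw [List.cons_append, ← hlast', List.dropLast_append_getLast hlne]
      have hclen : (i0 :: l.dropLast).length = m.1 + 1 := by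
        simp [List.length_dropLast, hl]
      have hmean : cycleMean A (i0 :: l.dropLast)
          = (mtPow A (m.1 + 1) i0 i0) ^ ((1 : ℝ) / ((m.1 : ℝ) + 1)) := by
        unfold cycleMean
        rw [cycleProd_eq, hcl, hW, hclen]
        push_cast
        ring_nf
      have hmem : cycleMean A (i0 :: l.dropLast) ∈ S :=
        ⟨i0 :: l.dropLast, by simp, by rw [hclen]; exact m.2, rfl⟩
      rw [htr]
      calc (mtPow A (m.1 + 1) i0 i0) ^ ((1 : ℝ) / ((m.1 : ℝ) + 1))
          = cycleMean A (i0 :: l.dropLast) := hmean.symm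
        _ ≤ specRad A := le_csSup hbdd hmem
end

section
/- Let A be a nonnegative n×n matrix with Tr(A) = max_{1 ≤ m ≤ n} tr_⊕ A^m ≤ 1, and let A* = I ⊕ A ⊕ ⋯ ⊕ A^{n-1} (max-times Kleene star). Then a positive vector x satisfies A x ≤ x entrywise (with (Ax)_i = max_j a_{ij} x_j) if and only if x = A* u for some positive vector u. -/
open scoped BigOperators

namespace Stmt5Aux

variable {n : ℕ}

/-- Weight of the walk that starts at `i` and then visits the vertices of `l` in order. -/
noncomputable def pw (A : Matrix (Fin n) (Fin n) ℝ) : Fin n → List (Fin n) → ℝ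
  | _, [] => 1
  | i, j :: l => A i j * pw A j l

lemma pw_nil (A : Matrix (Fin n) (Fin n) ℝ) (i : Fin n) : pw A i [] = 1 := rfl

lemma pw_cons (A : Matrix (Fin n) (Fin n) ℝ) (i j : Fin n) (l : List (Fin n)) :
    pw A i (j :: l) = A i j * pw A j l := rfl

lemma pw_nonneg {A : Matrix (Fin n) (Fin n) ℝ} (hA : ∀ i j, 0 ≤ A i j) :
    ∀ (l : List (Fin n)) (i : Fin n), 0 ≤ pw A i l
  | [], _ => zero_le_one
  | j :: l, i => mul_nonneg (hA i j) (pw_nonneg hA l j)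

lemma pw_append (A : Matrix (Fin n) (Fin n) ℝ) :
    ∀ (l₁ : List (Fin n)) (i : Fin n) (l₂ : List (Fin n)),
      pw A i (l₁ ++ l₂) = pw A i l₁ * pw A (l₁.getLastD i) l₂
  | [], i, l₂ => by simp [pw]
  | j :: l₁, i, l₂ => by
      simp only [List.cons_append, pw_cons, pw_append A l₁ j l₂, List.getLastD_cons, mul_assoc]

lemma getLastD_append {α : Type*} :
    ∀ (s t : List α) (d : α), (s ++ t).getLastD d = t.getLastD (s.getLastD d)
  | [], t, d => rfl
  | a :: s, t, d => by
      simp only [List.cons_append, List.getLastD_cons, getLastD_append s t a]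

lemma getLastD_concat' {α : Type*} (s : List α) (w d : α) :
    (s ++ [w]).getLastD d = w := by
  rw [getLastD_append]; rfl

section

variable {A : Matrix (Fin n) (Fin n) ℝ} (hn : 0 < n) (hA : ∀ i j, 0 ≤ A i j)

lemma le_fin_ciSup (f : Fin n → ℝ) (k : Fin n) : f k ≤ ⨆ j, f j :=
  le_ciSup (Set.Finite.bddAbove (Set.finite_range f)) k

include hn in
lemma fin_ciSup_le {f : Fin n → ℝ} {b : ℝ} (h : ∀ k, f k ≤ b) : (⨆ k, f k) ≤ b := by
  haveI : Nonempty (Fin n) := ⟨⟨0, hn⟩⟩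
  exact ciSup_le h

include hA in
lemma pow_nonneg : ∀ (m : ℕ) (i j : Fin n), 0 ≤ mtPow A m i j
  | 0, i, j => by dsimp [mtPow]; split <;> norm_num
  | m + 1, i, j =>
      Real.iSup_nonneg fun k => mul_nonneg (pow_nonneg m i k) (hA k j)

include hA in
lemma pw_le_pow (l : List (Fin n)) :
    ∀ i : Fin n, pw A i l ≤ mtPow A l.length i (l.getLastD i) := by
  induction l using List.reverseRecOn with
  | nil => intro i; simp [pw, mtPow]
  | append_singleton l j ih =>
      intro i
      rw [pw_append, getLastD_concat']
      have h1 : pw A i l * pw A (l.getLastD i) [j] =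
          pw A i l * A (l.getLastD i) j := by simp [pw]
      rw [h1]
      have h2 : pw A i l * A (l.getLastD i) j ≤
          mtPow A l.length i (l.getLastD i) * A (l.getLastD i) j :=
        mul_le_mul_of_nonneg_right (ih i) (hA _ j)
      refine h2.trans ?_
      have h3 : l.length + 1 = (l ++ [j]).length := by simp
      have : mtPow A (l.length + 1) i j =
          ⨆ k, mtPow A l.length i k * A k j := rfl
      rw [← h3, this]
      exact le_fin_ciSup (fun k => mtPow A l.length i k * A k j) (l.getLastD i)

include hn hA in
lemma pow_path : ∀ (m : ℕ) (i j : Fin n),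
    mtPow A m i j = 0 ∨
      ∃ l : List (Fin n), l.length = m ∧ l.getLastD i = j ∧ mtPow A m i j ≤ pw A i l := by
  intro m
  induction m with
  | zero =>
      intro i j
      by_cases h : i = j
      · exact Or.inr ⟨[], rfl, h, by simp [mtPow, h, pw]⟩
      · exact Or.inl (by simp [mtPow, h])
  | succ m ih =>
      intro i j
      haveI : Nonempty (Fin n) := ⟨⟨0, hn⟩⟩
      obtain ⟨k, hk⟩ := Finite.exists_max (fun k => mtPow A m i k * A k j)
      have hval : mtPow A (m + 1) i j = mtPow A m i k * A k j := by
        refine le_antisymm (fin_ciSup_le hn hk) ?_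
        exact le_fin_ciSup (fun k => mtPow A m i k * A k j) k
      rcases ih i k with h0 | ⟨l, hlen, hend, hle⟩
      · exact Or.inl (by rw [hval, h0, zero_mul])
      · refine Or.inr ⟨l ++ [j], by simp [hlen], getLastD_concat' l j i, ?_⟩
        rw [pw_append, hend]
        have : pw A k [j] = A k j * 1 := rfl
        rw [this, mul_one]
        rw [hval]
        exact mul_le_mul_of_nonneg_right hle (hA k j)

include hn hA in
lemma cycle_le_one (hTr : mtTr A ≤ 1) (q : List (Fin n)) (w : Fin n)
    (hq : q.length + 1 ≤ n) : pw A w (q ++ [w]) ≤ 1 := by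
  have h1 : pw A w (q ++ [w]) ≤ mtPow A (q.length + 1) w w := by
    have := pw_le_pow hA (q ++ [w]) w
    rwa [getLastD_concat', List.length_append, List.length_singleton] at this
  refine h1.trans ?_
  have h2 : mtPow A (q.length + 1) w w ≤ mtTrace (mtPow A (q.length + 1)) :=
    le_fin_ciSup (fun i => mtPow A (q.length + 1) i i) w
  refine h2.trans ?_
  have h3 : mtTrace (mtPow A (q.length + 1)) ≤ mtTr A :=
    le_fin_ciSup (fun m : Fin n => mtTrace (mtPow A (m.1 + 1))) ⟨q.length, by omega⟩
  exact h3.trans hTr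

lemma two_count_split :
    ∀ (l : List (Fin n)) (w : Fin n), 2 ≤ l.count w →
      ∃ p q r, l = p ++ w :: q ++ w :: r := by
  intro l
  induction l with
  | nil => intro w h; simp at h
  | cons a t ih =>
      intro w h
      by_cases haw : a = w
      · subst haw
        have hmem : a ∈ t := by
          by_contra hm
          rw [List.count_cons, List.count_eq_zero_of_not_mem hm] at h
          simp at h
        obtain ⟨q, r, hqr⟩ := List.append_of_mem hmem
        exact ⟨[], q, r, by simp [hqr]⟩
      · have : 2 ≤ t.count w := by
          rw [List.count_cons] at h
          simp [show ¬(a = w) from haw] at h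
          omega
        obtain ⟨p, q, r, hpqr⟩ := ih w this
        exact ⟨a :: p, q, r, by simp [hpqr]⟩

include hn hA in
lemma pow_le_star (hTr : mtTr A ≤ 1) :
    ∀ (m : ℕ) (i j : Fin n), mtPow A m i j ≤ kleeneStar A i j := by
  intro m
  induction m using Nat.strong_induction_on with
  | _ m IH =>
  intro i j
  have hstar_nonneg : 0 ≤ kleeneStar A i j :=
    Real.iSup_nonneg fun k => pow_nonneg hA k.1 i j
  by_cases hm : m < n
  · exact le_fin_ciSup (fun k : Fin n => mtPow A k.1 i j) ⟨m, hm⟩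
  · push_neg at hm
    rcases pow_path hn hA m i j with h0 | ⟨l, hlen, hend, hle⟩
    · rw [h0]; exact hstar_nonneg
    -- the full walk is i :: l, of length m + 1 ≥ n + 1
    have hfull_len : (i :: l).length = m + 1 := by simp [hlen]
    set t := (i :: l).take (n + 1) with ht
    have htlen : t.length = n + 1 := by
      rw [ht, List.length_take, hfull_len]; omega
    -- t has a duplicated vertex
    have hnotnodup : ¬ t.Nodup := by
      intro hnd
      have := hnd.length_le_card
      rw [htlen, Fintype.card_fin] at this
      omega
    have hdup : ∃ w, 2 ≤ t.count w := by
      by_contra hc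
      push_neg at hc
      exact hnotnodup (List.nodup_iff_count_le_one.mpr fun a => by
        have := hc a; omega)
    obtain ⟨w, hw⟩ := hdup
    obtain ⟨p, q, r, hpqr⟩ := two_count_split t w hw
    have hfull : i :: l = p ++ w :: q ++ w :: (r ++ (i :: l).drop (n + 1)) := by
      conv_lhs => rw [← List.take_append_drop (n + 1) (i :: l)]
      rw [← ht, hpqr]
      simp
    set r' := r ++ (i :: l).drop (n + 1) with hr'
    -- q.length + 1 ≤ n
    have hqn : q.length + 1 ≤ n := by
      have := congrArg List.length hpqr
      simp [List.length_append] at this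
      omega
    -- obtain s with l = s ++ (q ++ [w]) ++ r' and s.getLastD i = w
    have hkey : ∃ s : List (Fin n), l = s ++ ((q ++ [w]) ++ r') ∧ s.getLastD i = w := by
      cases p with
      | nil =>
          simp only [List.nil_append] at hfull
          have hiw : i = w := by injection hfull
          have hl : l = q ++ w :: r' := by injection hfull
          exact ⟨[], by rw [hl]; simp, by simpa using hiw⟩
      | cons a p' =>
          have h : i = a ∧ l = p' ++ w :: q ++ w :: r' := by
            have := hfull
            rw [List.cons_append] at this
            exact ⟨by injection this, by injection this⟩
          refine ⟨p' ++ [w], ?_, getLastD_concat' p' w i⟩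
          rw [h.2]; simp
    obtain ⟨s, hls, hsw⟩ := hkey
    -- the shortened walk
    set l₂ := s ++ r' with hl₂
    have hlen₂ : l₂.length < m := by
      have h1 : l.length = s.length + (q.length + 1 + r'.length) := by
        rw [hls]; simp; omega
      have h2 : l₂.length = s.length + r'.length := by rw [hl₂]; simp
      omega
    -- ends agree
    have hend₂ : l₂.getLastD i = j := by
      have e1 : l.getLastD i = r'.getLastD w := by
        rw [hls, getLastD_append, getLastD_append, hsw, getLastD_concat']
      have e2 : l₂.getLastD i = r'.getLastD w := by
        rw [hl₂, getLastD_append, hsw]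
      rw [e2, ← e1, hend]
    -- weight comparison
    have hwle : pw A i l ≤ pw A i l₂ := by
      have e1 : pw A i l = pw A i s * (pw A w (q ++ [w]) * pw A w r') := by
        rw [hls, pw_append A s i ((q ++ [w]) ++ r'), hsw,
          pw_append A (q ++ [w]) w r', getLastD_concat' q w w]
      have e2 : pw A i l₂ = pw A i s * pw A w r' := by
        rw [hl₂, pw_append A s i r', hsw]
      rw [e1, e2]
      have hc : pw A w (q ++ [w]) ≤ 1 := cycle_le_one hn hA hTr q w hqn
      have h4 : pw A w (q ++ [w]) * pw A w r' ≤ pw A w r' := by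
        have := mul_le_mul_of_nonneg_right hc (pw_nonneg hA r' w)
        simpa using this
      exact mul_le_mul_of_nonneg_left h4 (pw_nonneg hA s i)
    -- conclude via IH
    have h1 : pw A i l₂ ≤ mtPow A l₂.length i j := by
      have := pw_le_pow hA l₂ i
      rwa [hend₂] at this
    have h2 : mtPow A l₂.length i j ≤ kleeneStar A i j := IH l₂.length hlen₂ i j
    exact hle.trans (hwle.trans (h1.trans h2))

include hn hA in
lemma mul_pow_le : ∀ (m : ℕ) (i j k : Fin n),
    A i j * mtPow A m j k ≤ mtPow A (m + 1) i k := by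
  intro m
  induction m with
  | zero =>
      intro i j k
      by_cases h : j = k
      · subst h
        simp only [mtPow, if_pos rfl, mul_one]
        have : (if i = i then (1:ℝ) else 0) * A i j ≤
            ⨆ t, (if i = t then (1:ℝ) else 0) * A t j :=
          le_fin_ciSup (fun t => (if i = t then (1:ℝ) else 0) * A t j) i
        simpa [mtMulMat] using this
      · simp only [mtPow, if_neg h, mul_zero]
        exact pow_nonneg hA 1 i k
  | succ m ih =>
      intro i j k
      have hexp : mtPow A (m + 1) j k = ⨆ t, mtPow A m j t * A t k := rfl
      rw [hexp, Real.mul_iSup_of_nonneg (hA i j)]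
      refine fin_ciSup_le hn fun t => ?_
      have h1 : A i j * (mtPow A m j t * A t k) =
          (A i j * mtPow A m j t) * A t k := by ring
      rw [h1]
      have h2 : (A i j * mtPow A m j t) * A t k ≤ mtPow A (m + 1) i t * A t k :=
        mul_le_mul_of_nonneg_right (ih i j t) (hA t k)
      refine h2.trans ?_
      exact le_fin_ciSup (fun t => mtPow A (m + 1) i t * A t k) t

include hn hA in
lemma pow_apply_le {x : Fin n → ℝ} (hx : ∀ i, 0 < x i)
    (hax : ∀ i, (⨆ j, A i j * x j) ≤ x i) :
    ∀ (m : ℕ) (i : Fin n), (⨆ j, mtPow A m i j * x j) ≤ x i := by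
  intro m
  induction m with
  | zero =>
      intro i
      refine fin_ciSup_le hn fun j => ?_
      by_cases h : i = j
      · simp [mtPow, h]
      · simp [mtPow, h]
        exact (hx i).le
  | succ m ih =>
      intro i
      refine fin_ciSup_le hn fun j => ?_
      have hexp : mtPow A (m + 1) i j = ⨆ k, mtPow A m i k * A k j := rfl
      rw [hexp, Real.iSup_mul_of_nonneg (hx j).le]
      refine (fin_ciSup_le hn fun k => ?_).trans (ih i)
      have h1 : mtPow A m i k * A k j * x j = mtPow A m i k * (A k j * x j) := by ring
      rw [h1]
      have h2 : A k j * x j ≤ x k :=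
        (le_fin_ciSup (fun j' => A k j' * x j') j).trans (hax k)
      have h3 : mtPow A m i k * (A k j * x j) ≤ mtPow A m i k * x k :=
        mul_le_mul_of_nonneg_left h2 (pow_nonneg hA m i k)
      exact h3.trans (le_fin_ciSup (fun k => mtPow A m i k * x k) k)

end

end Stmt5Aux

open Stmt5Aux in
theorem stmt5 {n : ℕ} (hn : 0 < n) (A : Matrix (Fin n) (Fin n) ℝ)
    (hA : ∀ i j, 0 ≤ A i j) (hTr : mtTr A ≤ 1)
    (x : Fin n → ℝ) (hx : ∀ i, 0 < x i) :
    (∀ i, (⨆ j, A i j * x j) ≤ x i) ↔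
      ∃ u : Fin n → ℝ, (∀ i, 0 < u i) ∧ x = mtMulVec (kleeneStar A) u := by
  constructor
  · intro hax
    refine ⟨x, hx, ?_⟩
    funext i
    refine le_antisymm ?_ ?_
    · -- x i ≤ (A* x) i  : take j = i, m = 0
      have h1 : (1 : ℝ) ≤ kleeneStar A i i := by
        have h0 : mtPow A 0 i i = 1 := by simp [mtPow]
        have := le_fin_ciSup (fun m : Fin n => mtPow A m.1 i i) ⟨0, hn⟩
        rwa [h0] at this
      have h2 : x i ≤ kleeneStar A i i * x i := by
        nlinarith [hx i]
      exact h2.trans (le_fin_ciSup (fun j => kleeneStar A i j * x j) i)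
    · -- (A* x) i ≤ x i
      refine fin_ciSup_le hn fun j => ?_
      have hks : kleeneStar A i j * x j = ⨆ m : Fin n, mtPow A m.1 i j * x j := by
        exact Real.iSup_mul_of_nonneg (hx j).le _
      rw [hks]
      refine fin_ciSup_le hn fun m => ?_
      exact (le_fin_ciSup (fun j' => mtPow A m.1 i j' * x j') j).trans
        (pow_apply_le hn hA hx hax m.1 i)
  · rintro ⟨u, hu, rfl⟩
    intro i
    refine fin_ciSup_le hn fun j => ?_
    have hxj : mtMulVec (kleeneStar A) u j = ⨆ k, kleeneStar A j k * u k := rfl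
    rw [hxj, Real.mul_iSup_of_nonneg (hA i j)]
    refine fin_ciSup_le hn fun k => ?_
    have h1 : A i j * kleeneStar A j k ≤ kleeneStar A i k := by
      rw [show kleeneStar A j k = ⨆ m : Fin n, mtPow A m.1 j k from rfl,
        Real.mul_iSup_of_nonneg (hA i j)]
      refine fin_ciSup_le hn fun m => ?_
      exact (mul_pow_le hn hA m.1 i j k).trans (pow_le_star hn hA hTr (m.1 + 1) i k)
    have h2 : A i j * (kleeneStar A j k * u k) = (A i j * kleeneStar A j k) * u k := by ring
    rw [h2]
    have h3 : (A i j * kleeneStar A j k) * u k ≤ kleeneStar A i k * u k :=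
      mul_le_mul_of_nonneg_right h1 (hu k).le
    exact h3.trans (le_fin_ciSup (fun k => kleeneStar A i k * u k) k)
end

section
/- For any positive vector x in R^n, max_{i,j} a_{ij} x_j / x_i ≥ λ, where λ is the maximum cycle geometric mean of the nonnegative matrix A. That is, λ is a lower bound for the objective x^- A x. -/
open scoped BigOperators

lemma listProdLe {α : Type*} (f g : α → ℝ) :
    ∀ l : List α, (∀ p ∈ l, 0 ≤ f p) → (∀ p ∈ l, f p ≤ g p) →
      (l.map f).prod ≤ (l.map g).prod := by
  intro l
  induction l with
  | nil => intro _ _; simp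
  | cons a t ih =>
    intro h1 h2
    simp only [List.map_cons, List.prod_cons]
    have hf : (t.map f).prod ≥ 0 := by
      apply List.prod_nonneg
      intro y hy
      obtain ⟨p, hp, rfl⟩ := List.mem_map.mp hy
      exact h1 p (List.mem_cons_of_mem _ hp)
    have hga : 0 ≤ g a := le_trans (h1 a List.mem_cons_self) (h2 a List.mem_cons_self)
    exact mul_le_mul (h2 a List.mem_cons_self)
      (ih (fun p hp => h1 p (List.mem_cons_of_mem _ hp))
          (fun p hp => h2 p (List.mem_cons_of_mem _ hp))) hf hga

theorem stmt8 {n : ℕ} (hn : 0 < n) (A : Matrix (Fin n) (Fin n) ℝ)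
    (hA : ∀ i j, 0 ≤ A i j) (x : Fin n → ℝ) (hx : ∀ i, 0 < x i) :
    specRad A ≤ ⨆ i, ⨆ j, A i j * x j / x i := by
  set M := ⨆ i, ⨆ j, A i j * x j / x i with hM
  have hMnonneg : 0 ≤ M := by
    apply Real.iSup_nonneg; intro i
    apply Real.iSup_nonneg; intro j
    exact div_nonneg (mul_nonneg (hA i j) (hx j).le) (hx i).le
  have hle : ∀ i j, A i j * x j / x i ≤ M := by
    intro i j
    have h1 : A i j * x j / x i ≤ ⨆ j, A i j * x j / x i :=
      le_ciSup (f := fun j => A i j * x j / x i) (Finite.bddAbove_range _) j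
    exact h1.trans (le_ciSup (f := fun i => ⨆ j, A i j * x j / x i) (Finite.bddAbove_range _) i)
  have hkey : ∀ i j, A i j * x j ≤ M * x i := by
    intro i j
    have := hle i j
    rw [div_le_iff₀ (hx i)] at this
    linarith
  apply Real.sSup_le _ hMnonneg
  rintro r ⟨c, hc, hcn, rfl⟩
  unfold cycleMean
  set l := c.zip (c.rotate 1) with hl
  have hlen : l.length = c.length := by
    simp [hl, List.length_zip, List.length_rotate]
  have hP : ((l.map (fun p => A p.1 p.2)).prod) ≤ M ^ c.length := by
    have h1 : (l.map (fun p => A p.1 p.2 * x p.2)).prod ≤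
        (l.map (fun p => M * x p.1)).prod := by
      apply listProdLe
      · intro p _; exact mul_nonneg (hA _ _) (hx _).le
      · intro p _; exact hkey p.1 p.2
    have h2 : (l.map (fun p => A p.1 p.2 * x p.2)).prod =
        (l.map (fun p => A p.1 p.2)).prod * (l.map (fun p => x p.2)).prod := by
      rw [← List.prod_map_mul]
    have h3 : (l.map (fun p => M * x p.1)).prod =
        M ^ c.length * (l.map (fun p => x p.1)).prod := by
      rw [show (fun p : Fin n × Fin n => M * x p.1) =
        (fun p : Fin n × Fin n => (fun _ => M) p * x p.1) from rfl, List.prod_map_mul]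
      congr 1
      rw [show (l.map fun _ => M) = List.replicate l.length M from List.map_const (l := l) (b := M),
        List.prod_replicate, hlen]
    have hfst : l.map (fun p => x p.1) = c.map x := by
      rw [hl]
      rw [show (fun p : Fin n × Fin n => x p.1) = x ∘ Prod.fst from rfl]
      rw [← List.map_map]
      congr 1
      exact List.map_fst_zip (l₁ := c) (l₂ := c.rotate 1) (by rw [List.length_rotate])
    have hsnd : l.map (fun p => x p.2) = (c.map x).rotate 1 := by
      rw [hl]
      rw [show (fun p : Fin n × Fin n => x p.2) = x ∘ Prod.snd from rfl]
      rw [← List.map_map]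
      rw [List.map_snd_zip (l₁ := c) (l₂ := c.rotate 1) (by rw [List.length_rotate])]
      exact (List.map_rotate _ _ _)
    have hxprod : (l.map (fun p => x p.2)).prod = (l.map (fun p => x p.1)).prod := by
      rw [hfst, hsnd]
      exact (List.rotate_perm _ _).prod_eq
    have hxpos : 0 < (l.map (fun p => x p.1)).prod := by
      apply List.prod_pos
      intro y hy
      obtain ⟨p, hp, rfl⟩ := List.mem_map.mp hy
      exact hx _
    rw [h2, hxprod, h3] at h1
    exact le_of_mul_le_mul_right h1 hxpos
  have hPn : (0:ℝ) ≤ (l.map (fun p => A p.1 p.2)).prod := by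
    apply List.prod_nonneg
    intro y hy
    obtain ⟨p, hp, rfl⟩ := List.mem_map.mp hy
    exact hA _ _
  have hclen : (0:ℝ) < c.length := by
    have : c.length ≠ 0 := fun h => hc (List.length_eq_zero_iff.mp h)
    exact_mod_cast Nat.pos_of_ne_zero this
  calc ((l.map (fun p => A p.1 p.2)).prod) ^ ((1:ℝ) / c.length)
      ≤ (M ^ c.length) ^ ((1:ℝ) / c.length) := by
        apply Real.rpow_le_rpow hPn hP
        positivity
    _ = M := by
        rw [← Real.rpow_natCast M c.length, ← Real.rpow_mul hMnonneg]
        rw [mul_one_div, div_self (ne_of_gt hclen), Real.rpow_one]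
end

section
/- Let A_1, ..., A_m be nonnegative n×n matrices and w_1, ..., w_m positive numbers, and let B be the entrywise max B = max_k w_k A_k, with max-times spectral radius μ > 0. Then min over positive x of max_k w_k (max_{i,j} a^{(k)}_{ij} x_j / x_i) equals μ, and the minimizers are exactly the vectors x = (μ^{-1}B)* u with u positive. -/
open scoped BigOperators

set_option linter.unusedSectionVars false
set_option maxHeartbeats 1000000

namespace MT9



theorem list_prod_nonneg {α : Type*} {l : List α} {f : α → ℝ}
    (h : ∀ a ∈ l, 0 ≤ f a) : 0 ≤ (l.map f).prod := by
  induction l with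
  | nil => simp
  | cons a t ih =>
      simp only [List.map_cons, List.prod_cons]
      exact mul_nonneg (h a (by simp)) (ih fun b hb => h b (by simp [hb]))

theorem list_prod_le_prod {α : Type*} {l : List α} {f g : α → ℝ}
    (h0 : ∀ a ∈ l, 0 ≤ f a) (h : ∀ a ∈ l, f a ≤ g a) :
    (l.map f).prod ≤ (l.map g).prod := by
  induction l with
  | nil => simp
  | cons a t ih =>
      simp only [List.map_cons, List.prod_cons]
      have h0t : ∀ b ∈ t, 0 ≤ f b := fun b hb => h0 b (by simp [hb])
      have hga : 0 ≤ g a := (h0 a (by simp)).trans (h a (by simp))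
      exact mul_le_mul (h a (by simp)) (ih h0t fun b hb => h b (by simp [hb]))
        (list_prod_nonneg h0t) hga

theorem list_prod_const_mul {α : Type*} (t : ℝ) (f : α → ℝ) (l : List α) :
    (l.map fun a => t * f a).prod = t ^ l.length * (l.map f).prod := by
  induction l with
  | nil => simp
  | cons a s ih => simp [ih]; ring

/-- zip of a list with its 1-rotation, structurally. -/
theorem zip_rotate (v x : α) : ∀ (w : List α),
    (v :: w).zip (w ++ [x]) = (v :: w).zip w ++ [((v :: w).getLast (by simp), x)] := by
  intro w
  induction w generalizing v with
  | nil => simp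
  | cons a t ih =>
      simp only [List.cons_append, List.zip_cons_cons]
      rw [ih a]
      simp [List.getLast_cons]

theorem telescope (g : α → ℝ) (hg : ∀ a, g a ≠ 0) : ∀ (w : List α) (v : α),
    (((v :: w).zip w).map fun p => g p.1 / g p.2).prod
      = g v / g ((v :: w).getLast (by simp)) := by
  intro w
  induction w with
  | nil => intro v; simp [div_self (hg v)]
  | cons a t ih =>
      intro v
      simp only [List.zip_cons_cons, List.map_cons, List.prod_cons]
      rw [ih a, List.getLast_cons (List.cons_ne_nil a t)]
      rw [div_mul_div_comm, mul_comm (g v) (g a), mul_div_mul_left _ _ (hg a)]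

theorem not_nodup_decomp {α : Type*} : ∀ {l : List α}, ¬ l.Nodup →
    ∃ (u : List α) (v : α) (w r : List α), l = u ++ v :: w ++ v :: r := by
  intro l
  induction l with
  | nil => intro h; exact absurd List.nodup_nil h
  | cons a t ih =>
      intro h
      by_cases ha : a ∈ t
      · obtain ⟨w, r, rfl⟩ := List.append_of_mem ha
        exact ⟨[], a, w, r, by simp⟩
      · have ht : ¬ t.Nodup := fun hnd => h (List.nodup_cons.2 ⟨ha, hnd⟩)
        obtain ⟨u, v, w, r, rfl⟩ := ih ht
        exact ⟨a :: u, v, w, r, by simp⟩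


variable {ι : Type*} [Fintype ι] [Nonempty ι]

theorem le_csup (f : ι → ℝ) (i : ι) : f i ≤ ⨆ j, f j :=
  le_ciSup (Set.finite_range f).bddAbove i

theorem csup_le {f : ι → ℝ} {a : ℝ} (h : ∀ i, f i ≤ a) : (⨆ i, f i) ≤ a := ciSup_le h

theorem csup_attained (f : ι → ℝ) : ∃ i, (⨆ j, f j) = f i ∧ ∀ j, f j ≤ f i := by
  obtain ⟨i, hi⟩ := Finite.exists_max f
  exact ⟨i, le_antisymm (csup_le hi) (le_csup f i), hi⟩

theorem mul_csup {a : ℝ} (ha : 0 ≤ a) (f : ι → ℝ) : (a * ⨆ i, f i) = ⨆ i, a * f i := by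
  obtain ⟨i, hi, hmax⟩ := csup_attained f
  rw [hi]
  refine le_antisymm (le_csup (fun j => a * f j) i) (csup_le fun j => ?_)
  exact mul_le_mul_of_nonneg_left (hmax j) ha

theorem csup_mul {a : ℝ} (ha : 0 ≤ a) (f : ι → ℝ) : (⨆ i, f i) * a = ⨆ i, f i * a := by
  simp only [mul_comm _ a]; exact mul_csup ha f

theorem csup_nonneg {f : ι → ℝ} (h : ∃ i, 0 ≤ f i) : 0 ≤ ⨆ i, f i := by
  obtain ⟨i, hi⟩ := h; exact hi.trans (le_csup f i)

theorem csup_comm {κ : Type*} [Fintype κ] [Nonempty κ] (f : ι → κ → ℝ) :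
    (⨆ i, ⨆ j, f i j) = ⨆ j, ⨆ i, f i j := by
  refine le_antisymm (csup_le fun i => csup_le fun j => ?_)
    (csup_le fun j => csup_le fun i => ?_)
  · exact (le_csup (fun i => f i j) i).trans (le_csup (fun j => ⨆ i, f i j) j)
  · exact (le_csup (f i) j).trans (le_csup (fun i => ⨆ j, f i j) i)

/-- walk product: product of entries of `C` along the walk `i :: l`. -/
noncomputable def wp {n : ℕ} (C : Matrix (Fin n) (Fin n) ℝ) : Fin n → List (Fin n) → ℝ
  | _, [] => 1
  | i, j :: l => C i j * wp C j l

section walks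
variable {n : ℕ} [NeZero n] {C : Matrix (Fin n) (Fin n) ℝ}

instance : Nonempty (Fin n) := ⟨⟨0, Nat.pos_of_ne_zero (NeZero.ne n)⟩⟩

theorem wp_nonneg (hC : ∀ i j, 0 ≤ C i j) : ∀ (l : List (Fin n)) (i), 0 ≤ wp C i l := by
  intro l
  induction l with
  | nil => intro i; exact zero_le_one
  | cons a t ih => intro i; exact mul_nonneg (hC i a) (ih a)

theorem wp_cons (i a : Fin n) (l : List (Fin n)) : wp C i (a :: l) = C i a * wp C a l := rfl

theorem wp_append (s t : List (Fin n)) : ∀ i,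
    wp C i (s ++ t) = wp C i s * wp C ((i :: s).getLast (by simp)) t := by
  induction s with
  | nil => intro i; simp [wp]
  | cons a s' ih =>
      intro i
      rw [List.cons_append, wp_cons, wp_cons, ih a,
        List.getLast_cons (List.cons_ne_nil a s'), mul_assoc]

theorem wp_eq_zip : ∀ (l : List (Fin n)) (i),
    wp C i l = (((i :: l).zip l).map fun p => C p.1 p.2).prod := by
  intro l
  induction l with
  | nil => intro i; simp [wp]
  | cons a t ih => intro i; simp [wp, ih a]

theorem mtPow_nonneg (hC : ∀ i j, 0 ≤ C i j) : ∀ (k : ℕ) (i j), 0 ≤ mtPow C k i j := by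
  intro k
  induction k with
  | zero => intro i j; simp only [mtPow]; split <;> norm_num
  | succ k ih =>
      intro i j
      exact csup_nonneg ⟨j, mul_nonneg (ih i j) (hC j j)⟩

theorem mtMul_assoc {A B D : Matrix (Fin n) (Fin n) ℝ}
    (hA : ∀ i j, 0 ≤ A i j) (hD : ∀ i j, 0 ≤ D i j) :
    mtMulMat (mtMulMat A B) D = mtMulMat A (mtMulMat B D) := by
  funext i j
  show (⨆ l, (⨆ k, A i k * B k l) * D l j) = ⨆ k, A i k * ⨆ l, B k l * D l j
  have h1 : ∀ l : Fin n, (⨆ k, A i k * B k l) * D l j = ⨆ k, A i k * B k l * D l j :=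
    fun l => csup_mul (hD l j) _
  have h2 : ∀ k : Fin n, (A i k * ⨆ l, B k l * D l j) = ⨆ l, A i k * (B k l * D l j) :=
    fun k => mul_csup (hA i k) _
  simp only [h1, h2, mul_assoc]
  exact csup_comm _

theorem mtMul_id {D : Matrix (Fin n) (Fin n) ℝ} (hD : ∀ i j, 0 ≤ D i j) :
    mtMulMat D (mtPow C 0) = D := by
  funext i j
  show (⨆ l, D i l * mtPow C 0 l j) = D i j
  refine le_antisymm (csup_le fun l => ?_) ?_
  · show D i l * (if l = j then 1 else 0) ≤ D i j
    by_cases h : l = j <;> simp [h, hD i j]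
  · have := le_csup (fun l => D i l * mtPow C 0 l j) j
    simpa [mtPow] using this

theorem id_mtMul {D : Matrix (Fin n) (Fin n) ℝ} (hD : ∀ i j, 0 ≤ D i j) :
    mtMulMat (mtPow C 0) D = D := by
  funext i j
  show (⨆ l, mtPow C 0 i l * D l j) = D i j
  refine le_antisymm (csup_le fun l => ?_) ?_
  · show (if i = l then 1 else 0) * D l j ≤ D i j
    by_cases h : i = l <;> simp [h, hD i j, hD l j]
  · have := le_csup (fun l => mtPow C 0 i l * D l j) i
    simpa [mtPow] using this

theorem mtPow_succ_left (hC : ∀ i j, 0 ≤ C i j) (k : ℕ) :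
    mtPow C (k + 1) = mtMulMat C (mtPow C k) := by
  induction k with
  | zero => show mtMulMat (mtPow C 0) C = mtMulMat C (mtPow C 0); rw [mtMul_id hC, id_mtMul hC]
  | succ k ih =>
      show mtMulMat (mtPow C (k+1)) C = mtMulMat C (mtPow C (k+1))
      conv_lhs => rw [ih]
      rw [mtMul_assoc hC hC]
      rfl

theorem mtPow_succ_entry (hC : ∀ i j, 0 ≤ C i j) (k : ℕ) (i j : Fin n) :
    mtPow C (k + 1) i j = ⨆ l, C i l * mtPow C k l j := by
  rw [mtPow_succ_left hC k]; rfl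

theorem wp_le_mtPow (hC : ∀ i j, 0 ≤ C i j) : ∀ (l : List (Fin n)) (i),
    wp C i l ≤ mtPow C l.length i ((i :: l).getLast (by simp)) := by
  intro l
  induction l with
  | nil => intro i; simp [wp, mtPow]
  | cons a t ih =>
      intro i
      rw [List.getLast_cons (List.cons_ne_nil a t)]
      calc wp C i (a :: t) = C i a * wp C a t := rfl
        _ ≤ C i a * mtPow C t.length a ((a :: t).getLast (by simp)) :=
            mul_le_mul_of_nonneg_left (ih a) (hC i a)
        _ ≤ ⨆ l, C i l * mtPow C t.length l ((a :: t).getLast (by simp)) :=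
            le_csup (fun l => C i l * mtPow C t.length l _) a
        _ = mtPow C (t.length + 1) i ((a :: t).getLast (by simp)) :=
            (mtPow_succ_entry hC t.length i _).symm

theorem mtPow_one (hC : ∀ i j, 0 ≤ C i j) (i j : Fin n) : mtPow C 1 i j = C i j := by
  rw [mtPow_succ_entry hC 0 i j]
  refine le_antisymm (csup_le fun l => ?_) ?_
  · show C i l * (if l = j then 1 else 0) ≤ C i j
    by_cases h : l = j <;> simp [h, hC i j]
  · have := le_csup (fun l => C i l * mtPow C 0 l j) j
    simpa [mtPow] using this

theorem mtPow_attained (hC : ∀ i j, 0 ≤ C i j) : ∀ (k : ℕ) (i j : Fin n),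
    ∃ l : List (Fin n), l.length = k + 1 ∧ (i :: l).getLast (by simp) = j ∧
      wp C i l = mtPow C (k + 1) i j := by
  intro k
  induction k with
  | zero =>
      intro i j
      exact ⟨[j], rfl, rfl, by simp [wp, mtPow_one hC]⟩
  | succ k ih =>
      intro i j
      obtain ⟨l0, hl0, hmax⟩ := csup_attained (fun l => C i l * mtPow C (k + 1) l j)
      obtain ⟨l', hlen, hlast, hwp⟩ := ih l0 j
      refine ⟨l0 :: l', by simp [hlen], ?_, ?_⟩
      · rw [List.getLast_cons (List.cons_ne_nil l0 l')]; exact hlast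
      · show C i l0 * wp C l0 l' = _
        rw [hwp, mtPow_succ_entry hC (k + 1) i j, hl0]

end walks
section kleene
variable {n : ℕ} [NeZero n] {C : Matrix (Fin n) (Fin n) ℝ}

theorem getLast_append_cons {α : Type*} (s : List α) (v : α) (r : List α) (h) :
    (s ++ v :: r).getLast h = (v :: r).getLast (by simp) :=
  List.getLast_append_right (l := s) (by simp)

theorem getLast_congr {α : Type*} {l l' : List α} (h : l = l')
    (h1 : l ≠ []) (h2 : l' ≠ []) : l.getLast h1 = l'.getLast h2 := by
  subst h; rfl

theorem getLast_cons_append_singleton {α : Type*} (a v : α) (w : List α) (h) :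
    (a :: (w ++ [v])).getLast h = v := by
  rw [List.getLast_cons (by simp)]
  exact List.getLast_append_singleton w

theorem mtPow_le_kleene_lt {k : ℕ} (hk : k < n) (i j : Fin n) :
    mtPow C k i j ≤ kleeneStar C i j :=
  le_csup (fun m : Fin n => mtPow C m.1 i j) ⟨k, hk⟩

theorem one_le_kleene_diag (i : Fin n) : 1 ≤ kleeneStar C i i := by
  have := le_csup (fun m : Fin n => mtPow C m.1 i i) ⟨0, Nat.pos_of_ne_zero (NeZero.ne n)⟩
  simpa [mtPow, kleeneStar] using this

theorem cycleProd_eq_wp (v : Fin n) (w : List (Fin n)) :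
    (((v :: w).zip ((v :: w).rotate 1)).map fun p => C p.1 p.2).prod = wp C v (w ++ [v]) := by
  have hrot : (v :: w).rotate 1 = w ++ [v] := by
    rw [List.rotate_cons_succ, List.rotate_zero]
  rw [hrot, zip_rotate v v w, List.map_append, List.prod_append, wp_append w [v] v,
    ← wp_eq_zip]
  simp [wp]

theorem wp_le_kleene (hC : ∀ i j, 0 ≤ C i j)
    (hcyc : ∀ c : List (Fin n), c ≠ [] → c.length ≤ n →
      ((c.zip (c.rotate 1)).map fun p => C p.1 p.2).prod ≤ 1) :
    ∀ (N : ℕ) (l : List (Fin n)), l.length ≤ N → l.length ≤ n → ∀ i,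
      wp C i l ≤ kleeneStar C i ((i :: l).getLast (by simp)) := by
  intro N
  induction N with
  | zero =>
      intro l hN _ i
      have : l = [] := List.length_eq_zero_iff.mp (Nat.le_zero.mp hN)
      subst this
      simpa [wp] using one_le_kleene_diag (C := C) i
  | succ N ihN =>
      intro l hN hln i
      by_cases hnd : (i :: l).Nodup
      · have hcard : (i :: l).length ≤ n := by
          simpa [Fintype.card_fin] using hnd.length_le_card
        have hlt : l.length < n := by simpa using hcard
        exact (wp_le_mtPow hC l i).trans (mtPow_le_kleene_lt hlt i _)
      · obtain ⟨u, v, w, r, huvwr⟩ := not_nodup_decomp hnd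
        have hwv : wp C v (w ++ [v]) ≤ 1 := by
          have hlen : (v :: w).length ≤ n := by
            have h1 := congrArg List.length huvwr
            simp only [List.length_cons, List.length_append, List.nil_append] at h1
            simp only [List.length_cons]
            omega
          have := hcyc (v :: w) (by simp) hlen
          rwa [cycleProd_eq_wp] at this
        cases u with
        | nil =>
            have hi : i = v := by simpa using congrArg (fun t => t.headI) huvwr
            have hl : l = w ++ v :: r := by
              rw [hi] at huvwr; simpa using huvwr
            subst hi
            subst hl
            have hrl : r.length ≤ N := by
              simp only [List.length_append, List.length_cons] at hN
              omega
            have hrn : r.length ≤ n := by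
              simp only [List.length_append, List.length_cons] at hln
              omega
            have hte : ((i :: (w ++ i :: r)).getLast (by simp))
                = ((i :: r).getLast (by simp)) := by
              rw [List.getLast_cons (by simp), getLast_append_cons w i r]
            rw [hte]
            have hsplit : wp C i (w ++ i :: r) = wp C i (w ++ [i]) * wp C i r := by
              rw [show w ++ i :: r = (w ++ [i]) ++ r by simp,
                wp_append (w ++ [i]) r i, getLast_cons_append_singleton]
            rw [hsplit]
            calc wp C i (w ++ [i]) * wp C i r ≤ 1 * wp C i r :=
                  mul_le_mul_of_nonneg_right hwv (wp_nonneg hC r i)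
              _ = wp C i r := one_mul _
              _ ≤ kleeneStar C i ((i :: r).getLast (by simp)) := ihN r hrl hrn i
        | cons a u' =>
            have hi : i = a := by simpa using congrArg (fun t => t.headI) huvwr
            have hl : l = u' ++ v :: w ++ v :: r := by
              rw [hi] at huvwr; simpa using huvwr
            subst hi
            subst hl
            have hlen' : (u' ++ v :: r).length ≤ N := by
              simp only [List.length_append, List.length_cons] at hN ⊢
              omega
            have hln' : (u' ++ v :: r).length ≤ n := by
              simp only [List.length_append, List.length_cons] at hln ⊢
              omega
            have hte : ((i :: (u' ++ v :: w ++ v :: r)).getLast (by simp))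
                = ((i :: (u' ++ v :: r)).getLast (by simp)) := by
              rw [List.getLast_cons (by simp), List.getLast_cons (by simp)]
              exact ((getLast_congr
                  (show u' ++ v :: w ++ v :: r = (u' ++ v :: w) ++ v :: r by simp)
                  (by simp) (by simp)).trans
                ((getLast_append_cons (u' ++ v :: w) v r (by simp)).trans
                  (getLast_append_cons u' v r (by simp)).symm))
            have hwple : wp C i (u' ++ v :: w ++ v :: r) ≤ wp C i (u' ++ v :: r) := by
              have e1 : wp C i (u' ++ v :: w ++ v :: r) = wp C i u' *
                  (C ((i :: u').getLast (by simp)) v * (wp C v (w ++ [v]) * wp C v r)) := by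
                rw [show u' ++ v :: w ++ v :: r = u' ++ (v :: (w ++ v :: r)) by simp,
                  wp_append u' (v :: (w ++ v :: r)) i, wp_cons,
                  show w ++ v :: r = (w ++ [v]) ++ r by simp,
                  wp_append (w ++ [v]) r v, getLast_cons_append_singleton]
              have e2 : wp C i (u' ++ v :: r) = wp C i u' *
                  (C ((i :: u').getLast (by simp)) v * wp C v r) := by
                rw [wp_append u' (v :: r) i, wp_cons]
              rw [e1, e2]
              have h0 : 0 ≤ wp C i u' := wp_nonneg hC u' i
              have h1 : 0 ≤ C ((i :: u').getLast (by simp)) v := hC _ _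
              have h2 : 0 ≤ wp C v r := wp_nonneg hC r v
              have : wp C v (w ++ [v]) * wp C v r ≤ wp C v r :=
                mul_le_of_le_one_left h2 hwv
              exact mul_le_mul_of_nonneg_left
                (mul_le_mul_of_nonneg_left this h1) h0
            rw [hte]
            exact hwple.trans (ihN (u' ++ v :: r) hlen' hln' i)

theorem mtPow_le_kleene (hC : ∀ i j, 0 ≤ C i j)
    (hcyc : ∀ c : List (Fin n), c ≠ [] → c.length ≤ n →
      ((c.zip (c.rotate 1)).map fun p => C p.1 p.2).prod ≤ 1) :
    ∀ k ≤ n, ∀ i j, mtPow C k i j ≤ kleeneStar C i j := by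
  intro k hk i j
  rcases lt_or_eq_of_le hk with hlt | heq
  · exact mtPow_le_kleene_lt hlt i j
  · obtain ⟨k', hk'⟩ := Nat.exists_eq_succ_of_ne_zero (heq ▸ NeZero.ne n)
    subst hk'
    obtain ⟨l, hlen, hlast, hwp⟩ := mtPow_attained hC k' i j
    rw [← hwp, ← hlast]
    exact wp_le_kleene hC hcyc n l (by omega) (by omega) i

end kleene

section spectral
variable {n : ℕ} [NeZero n]

theorem list_prod_const {α : Type*} (M : ℝ) (l : List α) :
    (l.map fun _ => M).prod = M ^ l.length := by
  induction l with
  | nil => simp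
  | cons a t ih => simp [ih, pow_succ]; ring

theorem zip_rot_length {α : Type*} (c : List α) : (c.zip (c.rotate 1)).length = c.length := by
  simp [List.length_zip, List.length_rotate]

theorem rpow_trick {p t : ℝ} (hp : 0 ≤ p) (ht : 0 ≤ t) {len : ℕ} (hlen : len ≠ 0)
    (h : p ≤ t ^ len) : p ^ ((1:ℝ)/len) ≤ t := by
  have h1 : p ^ ((1:ℝ)/len) ≤ (t ^ len) ^ ((1:ℝ)/len) :=
    Real.rpow_le_rpow hp h (by positivity)
  have h2 : ((t : ℝ) ^ len) ^ ((1:ℝ)/len) = t := by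
    rw [← Real.rpow_natCast t len, ← Real.rpow_mul ht]
    rw [mul_one_div, div_self (Nat.cast_ne_zero.mpr hlen), Real.rpow_one]
  rwa [h2] at h1

theorem rpow_trick2 {p t : ℝ} (hp : 0 ≤ p) {len : ℕ} (hlen : len ≠ 0)
    (h : p ^ ((1:ℝ)/len) ≤ t) : p ≤ t ^ len := by
  have h0 : 0 ≤ p ^ ((1:ℝ)/len) := Real.rpow_nonneg hp _
  have e : p = (p ^ ((1:ℝ)/len)) ^ len := by
    rw [← Real.rpow_natCast (p ^ ((1:ℝ)/len)) len, ← Real.rpow_mul hp,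
      one_div_mul_cancel (Nat.cast_ne_zero.mpr hlen), Real.rpow_one]
  rw [e]
  exact pow_le_pow_left₀ h0 h len

variable {B : Matrix (Fin n) (Fin n) ℝ}

theorem spec_bddAbove (hB : ∀ i j, 0 ≤ B i j) :
    BddAbove {r : ℝ | ∃ c : List (Fin n), c ≠ [] ∧ c.length ≤ n ∧ r = cycleMean B c} := by
  classical
  set M : ℝ := max 1 (⨆ i, ⨆ j, B i j) with hM
  have hM1 : (1:ℝ) ≤ M := le_max_left _ _
  have hM0 : (0:ℝ) ≤ M := zero_le_one.trans hM1
  have hBM : ∀ a b, B a b ≤ M := fun a b =>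
    ((le_csup (fun j => B a j) b).trans (le_csup (fun i => ⨆ j, B i j) a)).trans
      (le_max_right _ _)
  refine ⟨M, fun r hr => ?_⟩
  obtain ⟨c, hcne, _, rfl⟩ := hr
  have hprod : (((c.zip (c.rotate 1)).map fun p => B p.1 p.2).prod) ≤ M ^ c.length := by
    calc (((c.zip (c.rotate 1)).map fun p => B p.1 p.2).prod)
        ≤ (((c.zip (c.rotate 1)).map fun _ => M).prod) :=
          list_prod_le_prod (fun p _ => hB p.1 p.2) (fun p _ => hBM p.1 p.2)
      _ = M ^ (c.zip (c.rotate 1)).length := list_prod_const M _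
      _ = M ^ c.length := by rw [zip_rot_length]
  have hlen0 : c.length ≠ 0 := fun h => hcne (List.length_eq_zero_iff.mp h)
  exact rpow_trick (list_prod_nonneg fun p _ => hB p.1 p.2) hM0 hlen0 hprod

theorem cycleMean_le_specRad (hB : ∀ i j, 0 ≤ B i j) {c : List (Fin n)}
    (hcne : c ≠ []) (hclen : c.length ≤ n) : cycleMean B c ≤ specRad B :=
  le_csSup (spec_bddAbove hB) ⟨c, hcne, hclen, rfl⟩

theorem cycleProd_le_specRad_pow (hB : ∀ i j, 0 ≤ B i j) {c : List (Fin n)}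
    (hcne : c ≠ []) (hclen : c.length ≤ n) :
    (((c.zip (c.rotate 1)).map fun p => B p.1 p.2).prod) ≤ (specRad B) ^ c.length := by
  have hlen0 : c.length ≠ 0 := fun h => hcne (List.length_eq_zero_iff.mp h)
  exact rpow_trick2 (list_prod_nonneg fun p _ => hB p.1 p.2) hlen0
    (cycleMean_le_specRad hB hcne hclen)

theorem Ccyc_le_one (hB : ∀ i j, 0 ≤ B i j) (hmu : 0 < specRad B) :
    ∀ c : List (Fin n), c ≠ [] → c.length ≤ n →
      ((c.zip (c.rotate 1)).map fun p => ((specRad B)⁻¹ • B) p.1 p.2).prod ≤ 1 := by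
  intro c hcne hclen
  have he : (fun p : Fin n × Fin n => ((specRad B)⁻¹ • B) p.1 p.2)
      = fun p => (specRad B)⁻¹ * B p.1 p.2 := by
    funext p; simp [Matrix.smul_apply]
  rw [he, list_prod_const_mul, zip_rot_length]
  calc (specRad B)⁻¹ ^ c.length * ((c.zip (c.rotate 1)).map fun p => B p.1 p.2).prod
      ≤ (specRad B)⁻¹ ^ c.length * (specRad B) ^ c.length :=
        mul_le_mul_of_nonneg_left (cycleProd_le_specRad_pow hB hcne hclen)
          (pow_nonneg (inv_nonneg.mpr hmu.le) _)
    _ = ((specRad B)⁻¹ * specRad B) ^ c.length := (mul_pow _ _ _).symm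
    _ = 1 := by rw [inv_mul_cancel₀ hmu.ne', one_pow]

theorem rot_ratio_prod {x : Fin n → ℝ} (hx : ∀ i, 0 < x i) (v : Fin n) (w : List (Fin n)) :
    (((v :: w).zip ((v :: w).rotate 1)).map fun p => x p.1 / x p.2).prod = 1 := by
  have hrot : (v :: w).rotate 1 = w ++ [v] := by
    rw [List.rotate_cons_succ, List.rotate_zero]
  rw [hrot, zip_rotate v v w, List.map_append, List.prod_append, telescope x
    (fun a => (hx a).ne') w v]
  simp only [List.map_cons, List.map_nil, List.prod_cons, List.prod_nil, mul_one]
  rw [div_mul_div_comm, mul_comm]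
  exact div_self (mul_ne_zero (hx _).ne' (hx _).ne')

theorem specRad_le_f (hB : ∀ i j, 0 ≤ B i j) {x : Fin n → ℝ} (hx : ∀ i, 0 < x i) :
    specRad B ≤ ⨆ i, ⨆ j, B i j * x j / x i := by
  set t := ⨆ i, ⨆ j, B i j * x j / x i with ht
  obtain ⟨i0⟩ := (inferInstance : Nonempty (Fin n))
  have hterm : ∀ a b, 0 ≤ B a b * x b / x a := fun a b =>
    div_nonneg (mul_nonneg (hB a b) (hx b).le) (hx a).le
  have ht0 : 0 ≤ t :=
    csup_nonneg ⟨i0, csup_nonneg ⟨i0, hterm i0 i0⟩⟩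
  have hedge : ∀ a b, B a b ≤ t * (x a / x b) := by
    intro a b
    have h1 : B a b * x b / x a ≤ t :=
      (le_csup (fun j => B a j * x j / x a) b).trans
        (le_csup (fun i => ⨆ j, B i j * x j / x i) a)
    have h2 : B a b * x b ≤ t * x a := (div_le_iff₀ (hx a)).mp h1
    have h3 : B a b ≤ t * x a / x b := (le_div_iff₀ (hx b)).mpr h2
    rwa [mul_div_assoc] at h3
  refine Real.sSup_le ?_ ht0
  rintro r ⟨c, hcne, hclen, rfl⟩
  obtain ⟨v, w, rfl⟩ : ∃ v w, c = v :: w := by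
    cases c with
    | nil => exact absurd rfl hcne
    | cons v w => exact ⟨v, w, rfl⟩
  have hlen0 : (v :: w).length ≠ 0 := by simp
  refine rpow_trick (list_prod_nonneg fun p _ => hB p.1 p.2) ht0 hlen0 ?_
  calc ((((v::w).zip ((v::w).rotate 1)).map fun p => B p.1 p.2).prod)
      ≤ ((((v::w).zip ((v::w).rotate 1)).map fun p => t * (x p.1 / x p.2)).prod) :=
        list_prod_le_prod (fun p _ => hB p.1 p.2) (fun p _ => hedge p.1 p.2)
    _ = t ^ ((v::w).zip ((v::w).rotate 1)).length *
          ((((v::w).zip ((v::w).rotate 1)).map fun p => x p.1 / x p.2).prod) :=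
        list_prod_const_mul t _ _
    _ = t ^ (v :: w).length := by rw [rot_ratio_prod hx, zip_rot_length, mul_one]

end spectral

section fixedpoint
variable {n : ℕ} [NeZero n] {C : Matrix (Fin n) (Fin n) ℝ}

theorem kleene_nonneg (hC : ∀ i j, 0 ≤ C i j) (i j : Fin n) : 0 ≤ kleeneStar C i j :=
  csup_nonneg ⟨⟨0, Nat.pos_of_ne_zero (NeZero.ne n)⟩, mtPow_nonneg hC 0 i j⟩

theorem kleene_vec_pos (hC : ∀ i j, 0 ≤ C i j) {u : Fin n → ℝ} (hu : ∀ i, 0 < u i)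
    (i : Fin n) : 0 < mtMulVec (kleeneStar C) u i := by
  have h1 : kleeneStar C i i * u i ≤ mtMulVec (kleeneStar C) u i :=
    le_csup (fun j => kleeneStar C i j * u j) i
  have h2 : u i ≤ kleeneStar C i i * u i := by
    nth_rewrite 1 [← one_mul (u i)]
    exact mul_le_mul_of_nonneg_right (one_le_kleene_diag i) (hu i).le
  exact lt_of_lt_of_le (hu i) (h2.trans h1)

theorem kleene_vec_sub (hC : ∀ i j, 0 ≤ C i j)
    (hcyc : ∀ c : List (Fin n), c ≠ [] → c.length ≤ n →
      ((c.zip (c.rotate 1)).map fun p => C p.1 p.2).prod ≤ 1)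
    {u : Fin n → ℝ} (hu : ∀ i, 0 ≤ u i) (i j : Fin n) :
    C i j * mtMulVec (kleeneStar C) u j ≤ mtMulVec (kleeneStar C) u i := by
  show C i j * (⨆ l, kleeneStar C j l * u l) ≤ _
  rw [mul_csup (hC i j)]
  refine csup_le fun l => ?_
  have hKK : C i j * kleeneStar C j l ≤ kleeneStar C i l := by
    show C i j * (⨆ m : Fin n, mtPow C m.1 j l) ≤ _
    rw [mul_csup (hC i j)]
    refine csup_le fun mk => ?_
    have h1 : C i j * mtPow C mk.1 j l ≤ mtPow C (mk.1 + 1) i l := by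
      rw [mtPow_succ_entry hC mk.1 i l]
      exact le_csup (fun a => C i a * mtPow C mk.1 a l) j
    exact h1.trans (mtPow_le_kleene hC hcyc (mk.1 + 1) (by omega) i l)
  calc C i j * (kleeneStar C j l * u l) = (C i j * kleeneStar C j l) * u l := by ring
    _ ≤ kleeneStar C i l * u l := mul_le_mul_of_nonneg_right hKK (hu l)
    _ ≤ mtMulVec (kleeneStar C) u i := le_csup (fun a => kleeneStar C i a * u a) l

theorem mtPow_vec_le (hC : ∀ i j, 0 ≤ C i j) {x : Fin n → ℝ} (hx : ∀ i, 0 < x i)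
    (hsub : ∀ i j, C i j * x j ≤ x i) :
    ∀ (k : ℕ) (i j), mtPow C k i j * x j ≤ x i := by
  intro k
  induction k with
  | zero =>
      intro i j
      show (if i = j then (1:ℝ) else 0) * x j ≤ x i
      by_cases h : i = j <;> simp [h, (hx j).le, (hx i).le]
  | succ k ih =>
      intro i j
      rw [mtPow_succ_entry hC k i j, csup_mul (hx j).le]
      refine csup_le fun l => ?_
      calc C i l * mtPow C k l j * x j = C i l * (mtPow C k l j * x j) := by ring
        _ ≤ C i l * x l := mul_le_mul_of_nonneg_left (ih l j) (hC i l)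
        _ ≤ x i := hsub i l

theorem kleene_fixed (hC : ∀ i j, 0 ≤ C i j) {x : Fin n → ℝ} (hx : ∀ i, 0 < x i)
    (hsub : ∀ i j, C i j * x j ≤ x i) :
    mtMulVec (kleeneStar C) x = x := by
  funext i
  refine le_antisymm (csup_le fun j => ?_) ?_
  · show kleeneStar C i j * x j ≤ x i
    rw [show kleeneStar C i j = ⨆ m : Fin n, mtPow C m.1 i j from rfl,
      csup_mul (hx j).le]
    exact csup_le fun mk => mtPow_vec_le hC hx hsub mk.1 i j
  · have h1 : kleeneStar C i i * x i ≤ mtMulVec (kleeneStar C) x i :=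
      le_csup (fun j => kleeneStar C i j * x j) i
    have h2 : x i ≤ kleeneStar C i i * x i := by
      nth_rewrite 1 [← one_mul (x i)]
      exact mul_le_mul_of_nonneg_right (one_le_kleene_diag i) (hx i).le
    exact h2.trans h1

end fixedpoint

end MT9

theorem stmt9 {n m : ℕ} (hn : 0 < n) (hm : 0 < m)
    (A : Fin m → Matrix (Fin n) (Fin n) ℝ) (hA : ∀ k i j, 0 ≤ A k i j)
    (w : Fin m → ℝ) (hw : ∀ k, 0 < w k)
    (B : Matrix (Fin n) (Fin n) ℝ) (hB : B = fun i j => ⨆ k, w k * A k i j)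
    (hmu : 0 < specRad B) :
    IsLeast {v : ℝ | ∃ x : Fin n → ℝ, (∀ i, 0 < x i) ∧
        v = ⨆ k, w k * ⨆ i, ⨆ j, A k i j * x j / x i} (specRad B) ∧
      ∀ x : Fin n → ℝ, (∀ i, 0 < x i) →
        ((⨆ k, w k * ⨆ i, ⨆ j, A k i j * x j / x i) = specRad B ↔
          ∃ u : Fin n → ℝ, (∀ i, 0 < u i) ∧
            x = mtMulVec (kleeneStar ((specRad B)⁻¹ • B)) u) := by
  haveI : NeZero n := ⟨hn.ne'⟩
  haveI : Nonempty (Fin m) := ⟨⟨0, hm⟩⟩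
  have hBnn : ∀ i j, 0 ≤ B i j := by
    intro i j
    rw [hB]
    exact MT9.csup_nonneg ⟨⟨0, hm⟩, mul_nonneg (hw _).le (hA _ i j)⟩
  have hCnn : ∀ i j, 0 ≤ ((specRad B)⁻¹ • B) i j := by
    intro i j
    show 0 ≤ (specRad B)⁻¹ * B i j
    exact mul_nonneg (inv_nonneg.mpr hmu.le) (hBnn i j)
  have hcyc := MT9.Ccyc_le_one hBnn hmu
  have hsmul : ∀ (x : Fin n → ℝ) i j,
      ((specRad B)⁻¹ • B) i j * x j = (specRad B)⁻¹ * (B i j * x j) := by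
    intro x i j
    show (specRad B)⁻¹ * B i j * x j = _
    ring
  have obj_eq : ∀ x : Fin n → ℝ, (∀ i, 0 < x i) →
      (⨆ k, w k * ⨆ i, ⨆ j, A k i j * x j / x i) = ⨆ i, ⨆ j, B i j * x j / x i := by
    intro x hx
    refine le_antisymm (MT9.csup_le fun k => ?_) (MT9.csup_le fun i => MT9.csup_le fun j => ?_)
    · rw [MT9.mul_csup (hw k).le]
      refine MT9.csup_le fun i => ?_
      rw [MT9.mul_csup (hw k).le]
      refine MT9.csup_le fun j => ?_
      have h1 : w k * A k i j ≤ B i j := by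
        rw [hB]
        exact MT9.le_csup (fun k' => w k' * A k' i j) k
      calc w k * (A k i j * x j / x i) = (w k * A k i j) * (x j / x i) := by ring
        _ ≤ B i j * (x j / x i) := mul_le_mul_of_nonneg_right h1 (div_nonneg (hx j).le (hx i).le)
        _ = B i j * x j / x i := by ring
        _ ≤ ⨆ j', B i j' * x j' / x i := MT9.le_csup (fun j' => B i j' * x j' / x i) j
        _ ≤ _ := MT9.le_csup (fun i' => ⨆ j', B i' j' * x j' / x i') i
    · have hBij : B i j = ⨆ k, w k * A k i j := by rw [hB]
      rw [hBij, mul_div_assoc, MT9.csup_mul (div_nonneg (hx j).le (hx i).le)]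
      refine MT9.csup_le fun k => ?_
      calc w k * A k i j * (x j / x i) = w k * (A k i j * x j / x i) := by ring
        _ ≤ w k * ⨆ i', ⨆ j', A k i' j' * x j' / x i' :=
            mul_le_mul_of_nonneg_left
              ((MT9.le_csup (fun j' => A k i j' * x j' / x i) j).trans
                (MT9.le_csup (fun i' => ⨆ j', A k i' j' * x j' / x i') i)) (hw k).le
        _ ≤ _ := MT9.le_csup (fun k' => w k' * ⨆ i', ⨆ j', A k' i' j' * x j' / x i') k
  have f_lb : ∀ x : Fin n → ℝ, (∀ i, 0 < x i) →
      specRad B ≤ ⨆ i, ⨆ j, B i j * x j / x i := fun x hx => MT9.specRad_le_f hBnn hx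
  have key1 : ∀ x : Fin n → ℝ, (∀ i, 0 < x i) →
      (∀ i j, ((specRad B)⁻¹ • B) i j * x j ≤ x i) →
      (⨆ i, ⨆ j, B i j * x j / x i) ≤ specRad B := by
    intro x hx hsub
    refine MT9.csup_le fun i => MT9.csup_le fun j => ?_
    rw [div_le_iff₀ (hx i)]
    have h1 := hsub i j
    rw [hsmul x i j] at h1
    have h2 : B i j * x j = specRad B * ((specRad B)⁻¹ * (B i j * x j)) := by
      field_simp
    rw [h2]
    exact mul_le_mul_of_nonneg_left h1 hmu.le
  have key2 : ∀ x : Fin n → ℝ, (∀ i, 0 < x i) →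
      (⨆ i, ⨆ j, B i j * x j / x i) = specRad B →
      ∀ i j, ((specRad B)⁻¹ • B) i j * x j ≤ x i := by
    intro x hx hf i j
    have h1 : B i j * x j / x i ≤ specRad B := by
      rw [← hf]
      exact (MT9.le_csup (fun j' => B i j' * x j' / x i) j).trans
        (MT9.le_csup (fun i' => ⨆ j', B i' j' * x j' / x i') i)
    have h2 : B i j * x j ≤ specRad B * x i := (div_le_iff₀ (hx i)).mp h1
    rw [hsmul x i j]
    calc (specRad B)⁻¹ * (B i j * x j) ≤ (specRad B)⁻¹ * (specRad B * x i) :=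
        mul_le_mul_of_nonneg_left h2 (inv_nonneg.mpr hmu.le)
      _ = x i := by field_simp
  refine ⟨⟨?_, ?_⟩, ?_⟩
  · -- membership: the Kleene star applied to the all-ones vector is a minimizer
    have hupos : ∀ i : Fin n, 0 < (fun _ : Fin n => (1:ℝ)) i := fun _ => one_pos
    have hx0pos := MT9.kleene_vec_pos hCnn hupos
    have hsub := MT9.kleene_vec_sub hCnn hcyc (fun i => (hupos i).le)
    refine ⟨mtMulVec (kleeneStar ((specRad B)⁻¹ • B)) (fun _ => (1:ℝ)), hx0pos, ?_⟩
    rw [obj_eq _ hx0pos]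
    exact (le_antisymm (key1 _ hx0pos hsub) (f_lb _ hx0pos)).symm
  · rintro v ⟨x, hx, rfl⟩
    rw [obj_eq x hx]
    exact f_lb x hx
  · intro x hx
    constructor
    · intro hobj
      rw [obj_eq x hx] at hobj
      have hsub := key2 x hx hobj
      exact ⟨x, hx, (MT9.kleene_fixed hCnn hx hsub).symm⟩
    · rintro ⟨u, hu, hxe⟩
      have hsub' := MT9.kleene_vec_sub hCnn hcyc (fun i => (hu i).le)
      have hsub : ∀ i j, ((specRad B)⁻¹ • B) i j * x j ≤ x i := by
        intro i j
        rw [hxe]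
        exact hsub' i j
      rw [obj_eq x hx]
      exact le_antisymm (key1 x hx hsub) (f_lb x hx)
end

section
/- For any positive n×n real matrix A and any positive vector x in R^n, the inequality q^- x (Ax)^- p ≤ q^- A^- p holds for every positive vector q and nonnegative nonzero vector p. Here y^- denotes entrywise reciprocal (as a row vector), A^- is the conjugate transpose with (A^-)_{ij} = 1/a_{ji}, and all products are max-times. -/
open scoped BigOperators

theorem stmt10 {n : ℕ} (hn : 0 < n) (A : Matrix (Fin n) (Fin n) ℝ)
    (hA : ∀ i j, 0 < A i j) (x q p : Fin n → ℝ)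
    (hx : ∀ i, 0 < x i) (hq : ∀ i, 0 < q i) (hp : ∀ i, 0 ≤ p i) (hp0 : p ≠ 0) :
    (⨆ i, x i / q i) * (⨆ i, p i / (⨆ j, A i j * x j)) ≤
      ⨆ i, ⨆ j, (q i)⁻¹ * (A j i)⁻¹ * p j := by

  haveI : Nonempty (Fin n) := ⟨⟨0, hn⟩⟩
  have hle : ∀ (f : Fin n → ℝ) (i : Fin n), f i ≤ ⨆ j, f j := fun f i =>
    le_ciSup (Set.Finite.bddAbove (Set.finite_range f)) i
  obtain ⟨i0, hi0⟩ := Finite.exists_max (fun i => x i / q i)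
  obtain ⟨i1, hi1⟩ := Finite.exists_max (fun i => p i / (⨆ j, A i j * x j))
  have h1 : (⨆ i, x i / q i) = x i0 / q i0 :=
    le_antisymm (ciSup_le hi0) (hle (fun i => x i / q i) i0)
  have h2 : (⨆ i, p i / (⨆ j, A i j * x j)) = p i1 / (⨆ j, A i1 j * x j) :=
    le_antisymm (ciSup_le hi1) (hle (fun i => p i / (⨆ j, A i j * x j)) i1)
  rw [h1, h2]
  have hS : A i1 i0 * x i0 ≤ ⨆ j, A i1 j * x j := hle (fun j => A i1 j * x j) i0
  have hSpos : (0:ℝ) < ⨆ j, A i1 j * x j :=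
    lt_of_lt_of_le (mul_pos (hA i1 i0) (hx i0)) hS
  have key : x i0 / q i0 * (p i1 / (⨆ j, A i1 j * x j)) ≤ (q i0)⁻¹ * (A i1 i0)⁻¹ * p i1 := by
    have hx0 := hx i0
    have hq0 := hq i0
    have hA0 := hA i1 i0
    have h3 : x i0 / (⨆ j, A i1 j * x j) ≤ (A i1 i0)⁻¹ := by
      rw [div_le_iff₀ hSpos, inv_mul_eq_div, le_div_iff₀ hA0]
      linarith [hS]
    calc x i0 / q i0 * (p i1 / (⨆ j, A i1 j * x j))
        = (q i0)⁻¹ * (x i0 / (⨆ j, A i1 j * x j)) * p i1 := by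
          field_simp
      _ ≤ (q i0)⁻¹ * (A i1 i0)⁻¹ * p i1 := by
          apply mul_le_mul_of_nonneg_right _ (hp i1)
          exact mul_le_mul_of_nonneg_left h3 (le_of_lt (inv_pos.mpr hq0))
  refine key.trans ?_
  calc (q i0)⁻¹ * (A i1 i0)⁻¹ * p i1
      ≤ ⨆ j, (q i0)⁻¹ * (A j i0)⁻¹ * p j := hle (fun j => (q i0)⁻¹ * (A j i0)⁻¹ * p j) i1
    _ ≤ ⨆ i, ⨆ j, (q i)⁻¹ * (A j i)⁻¹ * p j := hle (fun i => ⨆ j, (q i)⁻¹ * (A j i)⁻¹ * p j) i0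
end

section
/- Let A be a positive m×n matrix, p a positive m-vector, q a positive n-vector, and Δ = q^- A^- p = max_{i,j} q_i^{-1} a_{ji}^{-1} p_j. Then the maximum over positive n-vectors x of q^- x (Ax)^- p equals Δ, and it is attained exactly by those positive x for which there exist indices k, l with q_k^{-1} a_{lk}^{-1} p_l = Δ and max_j a_{lj} x_j = a_{lk} x_k. -/
open scoped BigOperators

private lemma le_isup {N : ℕ} (f : Fin N → ℝ) (i : Fin N) : f i ≤ ⨆ j, f j :=
  le_ciSup (Set.finite_range f).bddAbove i

theorem stmt11 {m n : ℕ} (hm : 0 < m) (hn : 0 < n)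
    (A : Matrix (Fin m) (Fin n) ℝ) (hA : ∀ i j, 0 < A i j)
    (p : Fin m → ℝ) (hp : ∀ i, 0 < p i) (q : Fin n → ℝ) (hq : ∀ i, 0 < q i) :
    IsGreatest {v : ℝ | ∃ x : Fin n → ℝ, (∀ i, 0 < x i) ∧
        v = (⨆ i, x i / q i) * (⨆ l, p l / (⨆ j, A l j * x j))}
      (⨆ i, ⨆ j, (q i)⁻¹ * (A j i)⁻¹ * p j) ∧
      ∀ x : Fin n → ℝ, (∀ i, 0 < x i) →
        ((⨆ i, x i / q i) * (⨆ l, p l / (⨆ j, A l j * x j)) =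
            (⨆ i, ⨆ j, (q i)⁻¹ * (A j i)⁻¹ * p j) ↔
          ∃ k : Fin n, ∃ l : Fin m,
            (q k)⁻¹ * (A l k)⁻¹ * p l = (⨆ i, ⨆ j, (q i)⁻¹ * (A j i)⁻¹ * p j) ∧
              (⨆ j, A l j * x j) = A l k * x k) := by
  haveI : NeZero m := ⟨hm.ne'⟩
  haveI : NeZero n := ⟨hn.ne'⟩
  set D := ⨆ i, ⨆ j, (q i)⁻¹ * (A j i)⁻¹ * p j with hDdef
  have hterm : ∀ (i : Fin n) (j : Fin m), (q i)⁻¹ * (A j i)⁻¹ * p j ≤ D := by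
    intro i j
    exact (le_isup (fun j => (q i)⁻¹ * (A j i)⁻¹ * p j) j).trans
      (le_isup (fun i => ⨆ j, (q i)⁻¹ * (A j i)⁻¹ * p j) i)
  have hTpos : ∀ (x : Fin n → ℝ), (∀ i, 0 < x i) → ∀ l : Fin m,
      (0 : ℝ) < ⨆ j, A l j * x j := by
    intro x hx l
    exact lt_of_lt_of_le (mul_pos (hA l ⟨0, hn⟩) (hx ⟨0, hn⟩))
      (le_isup (fun j => A l j * x j) ⟨0, hn⟩)
  -- lower bound: if the l-th row sup is attained at k, the value is ≥ the (k,l) term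
  have hlow : ∀ (x : Fin n → ℝ), (∀ i, 0 < x i) → ∀ (k : Fin n) (l : Fin m),
      (⨆ j, A l j * x j) = A l k * x k →
      (q k)⁻¹ * (A l k)⁻¹ * p l ≤
        (⨆ i, x i / q i) * (⨆ l, p l / (⨆ j, A l j * x j)) := by
    intro x hx k l hT
    have h1 : x k / q k ≤ ⨆ i, x i / q i := le_isup (fun i => x i / q i) k
    have h2 : p l / (⨆ j, A l j * x j) ≤ ⨆ l', p l' / (⨆ j, A l' j * x j) :=
      le_isup (fun l' => p l' / (⨆ j, A l' j * x j)) l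
    have h2' : (0 : ℝ) ≤ p l / (⨆ j, A l j * x j) :=
      div_nonneg (hp l).le (hTpos x hx l).le
    have hmul := mul_le_mul h1 h2 h2'
      (le_trans (div_nonneg (hx k).le (hq k).le) h1)
    refine le_trans (le_of_eq ?_) hmul
    rw [hT]
    have h3 : A l k ≠ 0 := (hA l k).ne'
    have h4 : x k ≠ 0 := (hx k).ne'
    have h5 : q k ≠ 0 := (hq k).ne'
    field_simp
  -- upper bound
  have hub : ∀ (x : Fin n → ℝ), (∀ i, 0 < x i) →
      (⨆ i, x i / q i) * (⨆ l, p l / (⨆ j, A l j * x j)) ≤ D := by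
    intro x hx
    obtain ⟨i0, hi0⟩ := Finite.exists_max (fun i => x i / q i)
    have hS : (⨆ i, x i / q i) = x i0 / q i0 :=
      le_antisymm (ciSup_le hi0) (le_isup (fun i => x i / q i) i0)
    rw [hS]
    have hSpos : (0 : ℝ) < x i0 / q i0 := div_pos (hx i0) (hq i0)
    rw [← le_div_iff₀' hSpos]
    refine ciSup_le fun l => ?_
    rw [le_div_iff₀ hSpos]
    have hrow : A l i0 * x i0 ≤ ⨆ j, A l j * x j := le_isup (fun j => A l j * x j) i0
    have hstep : p l / (⨆ j, A l j * x j) * (x i0 / q i0) ≤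
        p l / (A l i0 * x i0) * (x i0 / q i0) := by
      gcongr
      · exact (hp l).le
      · exact mul_pos (hA l i0) (hx i0)
    refine hstep.trans ?_
    have heq : p l / (A l i0 * x i0) * (x i0 / q i0) = (q i0)⁻¹ * (A l i0)⁻¹ * p l := by
      have h3 : A l i0 ≠ 0 := (hA l i0).ne'
      have h4 : x i0 ≠ 0 := (hx i0).ne'
      have h5 : q i0 ≠ 0 := (hq i0).ne'
      field_simp
    rw [heq]
    exact hterm i0 l
  constructor
  · constructor
    · -- membership: exhibit an attaining x
      obtain ⟨i0, hi0⟩ := Finite.exists_max (fun i => ⨆ j, (q i)⁻¹ * (A j i)⁻¹ * p j)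
      obtain ⟨l0, hl0⟩ := Finite.exists_max (fun j => (q i0)⁻¹ * (A j i0)⁻¹ * p j)
      have hDeq : D = (q i0)⁻¹ * (A l0 i0)⁻¹ * p l0 := by
        refine le_antisymm (ciSup_le fun i => le_trans (hi0 i) (ciSup_le hl0))
          (hterm i0 l0)
      refine ⟨fun j => (A l0 j)⁻¹, fun j => inv_pos.mpr (hA l0 j), ?_⟩
      have hT : (⨆ j, A l0 j * (A l0 j)⁻¹) = A l0 i0 * (A l0 i0)⁻¹ := by
        have hone : ∀ j : Fin n, A l0 j * (A l0 j)⁻¹ = 1 :=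
          fun j => mul_inv_cancel₀ (hA l0 j).ne'
        simp only [hone, ciSup_const]
      refine le_antisymm ?_
        (hub (fun j => (A l0 j)⁻¹) (fun j => inv_pos.mpr (hA l0 j)))
      calc D = (q i0)⁻¹ * (A l0 i0)⁻¹ * p l0 := hDeq
        _ ≤ _ := hlow (fun j => (A l0 j)⁻¹) (fun j => inv_pos.mpr (hA l0 j)) i0 l0 hT
    · rintro v ⟨x, hx, rfl⟩
      exact hub x hx
  · intro x hx
    constructor
    · intro hval
      obtain ⟨i0, hi0⟩ := Finite.exists_max (fun i => x i / q i)
      obtain ⟨l0, hl0⟩ := Finite.exists_max (fun l => p l / (⨆ j, A l j * x j))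
      have hS : (⨆ i, x i / q i) = x i0 / q i0 :=
        le_antisymm (ciSup_le hi0) (le_isup (fun i => x i / q i) i0)
      have hL : (⨆ l, p l / (⨆ j, A l j * x j)) = p l0 / (⨆ j, A l0 j * x j) :=
        le_antisymm (ciSup_le hl0) (le_isup (fun l => p l / (⨆ j, A l j * x j)) l0)
      have hval' : (x i0 / q i0) * (p l0 / (⨆ j, A l0 j * x j)) = D := by
        rw [← hS, ← hL]; exact hval
      have hrow : A l0 i0 * x i0 ≤ ⨆ j, A l0 j * x j := le_isup (fun j => A l0 j * x j) i0
      have hrowpos : (0 : ℝ) < A l0 i0 * x i0 := mul_pos (hA l0 i0) (hx i0)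
      have hTpos0 : (0 : ℝ) < ⨆ j, A l0 j * x j := hTpos x hx l0
      have hSpos : (0 : ℝ) < x i0 / q i0 := div_pos (hx i0) (hq i0)
      -- D ≤ term(i0, l0)
      have hkey : D ≤ (x i0 / q i0) * (p l0 / (A l0 i0 * x i0)) := by
        rw [← hval']
        gcongr
        exact (hp l0).le
      have heq : (x i0 / q i0) * (p l0 / (A l0 i0 * x i0)) =
          (q i0)⁻¹ * (A l0 i0)⁻¹ * p l0 := by
        have h3 : A l0 i0 ≠ 0 := (hA l0 i0).ne'
        have h4 : x i0 ≠ 0 := (hx i0).ne'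
        have h5 : q i0 ≠ 0 := (hq i0).ne'
        field_simp
      have hDterm : (q i0)⁻¹ * (A l0 i0)⁻¹ * p l0 = D :=
        le_antisymm (hterm i0 l0) (heq ▸ hkey)
      refine ⟨i0, l0, hDterm, ?_⟩
      -- from equality, the row sup must be attained at i0
      have heq2 : (x i0 / q i0) * (p l0 / (⨆ j, A l0 j * x j)) =
          (x i0 / q i0) * (p l0 / (A l0 i0 * x i0)) := by
        rw [hval', ← hDterm, heq]
      have heq3 : p l0 / (⨆ j, A l0 j * x j) = p l0 / (A l0 i0 * x i0) :=
        mul_left_cancel₀ hSpos.ne' heq2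
      have heq4 : ((⨆ j, A l0 j * x j) : ℝ)⁻¹ = (A l0 i0 * x i0)⁻¹ := by
        have hp0 : p l0 ≠ 0 := (hp l0).ne'
        rw [div_eq_mul_inv, div_eq_mul_inv] at heq3
        exact mul_left_cancel₀ hp0 heq3
      exact inv_injective heq4
    · rintro ⟨k, l, hkl, hT⟩
      refine le_antisymm (hub x hx) ?_
      calc D = (q k)⁻¹ * (A l k)⁻¹ * p l := hkl.symm
        _ ≤ _ := hlow x hx k l hT
end

section
/- Let A be a nonnegative n×n matrix with Tr(A) ≤ 1, p a nonzero nonnegative n-vector, q a positive n-vector, and δ = q^- A* p where A* is the max-times Kleene star. Then the minimum of q^- x x^- p over positive vectors x satisfying A x ≤ x equals δ, and the optimal x are exactly x = (δ^{-1} p q^- ⊕ A)* u for positive u. -/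
open scoped BigOperators

namespace Stmt13Aux

variable {n : ℕ}

lemma fsup_le (hn : 0 < n) {f : Fin n → ℝ} {a : ℝ} (h : ∀ i, f i ≤ a) : (⨆ i, f i) ≤ a := by
  haveI : Nonempty (Fin n) := ⟨⟨0, hn⟩⟩
  exact ciSup_le h

lemma le_fsup (f : Fin n → ℝ) (i : Fin n) : f i ≤ ⨆ j, f j :=
  le_ciSup (Set.Finite.bddAbove (Set.finite_range f)) i

lemma fsup_ex (hn : 0 < n) (f : Fin n → ℝ) : ∃ i, (⨆ j, f j) = f i := by
  haveI : Nonempty (Fin n) := ⟨⟨0, hn⟩⟩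
  obtain ⟨i, hi⟩ := Finite.exists_max f
  exact ⟨i, le_antisymm (ciSup_le hi) (le_fsup f i)⟩

lemma fsup_nonneg {f : Fin n → ℝ} (h : ∀ i, 0 ≤ f i) : 0 ≤ ⨆ i, f i :=
  Real.iSup_nonneg h

variable {C : Matrix (Fin n) (Fin n) ℝ}

lemma pow_nonneg (hC : ∀ i j, 0 ≤ C i j) : ∀ m i j, 0 ≤ mtPow C m i j := by
  intro m
  induction m with
  | zero => intro i j; simp only [mtPow]; split <;> norm_num
  | succ m ih =>
      intro i j
      exact fsup_nonneg fun k => mul_nonneg (ih i k) (hC k j)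

lemma pow_one_eq (hn : 0 < n) (hC : ∀ i j, 0 ≤ C i j) (i j : Fin n) :
    mtPow C 1 i j = C i j := by
  show (⨆ k, mtPow C 0 i k * C k j) = C i j
  refine le_antisymm (fsup_le hn fun k => ?_) ?_
  · show (if i = k then (1:ℝ) else 0) * C k j ≤ C i j
    rcases eq_or_ne i k with h | h
    · subst h; simp
    · simp [h, hC i j]
  · have := le_fsup (fun k => mtPow C 0 i k * C k j) i
    simpa [mtPow] using this

lemma powmul (hn : 0 < n) (hC : ∀ i j, 0 ≤ C i j) :
    ∀ (b a : ℕ) (i k j : Fin n), mtPow C a i k * mtPow C b k j ≤ mtPow C (a + b) i j := by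
  intro b
  induction b with
  | zero =>
      intro a i k j
      show mtPow C a i k * (if k = j then (1:ℝ) else 0) ≤ mtPow C a i j
      rcases eq_or_ne k j with h | h
      · subst h; simp
      · simp [h, pow_nonneg hC a i j]
  | succ b ih =>
      intro a i k j
      show mtPow C a i k * (⨆ k', mtPow C b k k' * C k' j) ≤ mtPow C (a + (b+1)) i j
      rw [Real.mul_iSup_of_nonneg (pow_nonneg hC a i k)]
      refine fsup_le hn fun k' => ?_
      have h1 : mtPow C a i k * (mtPow C b k k' * C k' j)
          = (mtPow C a i k * mtPow C b k k') * C k' j := by ring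
      rw [h1]
      have h2 : (mtPow C a i k * mtPow C b k k') * C k' j ≤ mtPow C (a+b) i k' * C k' j :=
        mul_le_mul_of_nonneg_right (ih a i k k') (hC k' j)
      refine h2.trans ?_
      have h3 : (a + (b+1)) = (a+b) + 1 := by omega
      rw [h3]
      exact le_fsup (fun k' => mtPow C (a+b) i k' * C k' j) k'

/-- weight of the path `w 0, w 1, ..., w m` -/
noncomputable def pw (C : Matrix (Fin n) (Fin n) ℝ) (m : ℕ) (w : ℕ → Fin n) : ℝ :=
  ∏ u ∈ Finset.range m, C (w u) (w (u+1))

lemma pw_nonneg (hC : ∀ i j, 0 ≤ C i j) (m : ℕ) (w : ℕ → Fin n) : 0 ≤ pw C m w :=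
  Finset.prod_nonneg fun u _ => hC _ _

lemma pw_le_pow (hC : ∀ i j, 0 ≤ C i j) (m : ℕ) (w : ℕ → Fin n) :
    pw C m w ≤ mtPow C m (w 0) (w m) := by
  induction m with
  | zero => simp [pw, mtPow]
  | succ m ih =>
      have h1 : pw C (m+1) w = pw C m w * C (w m) (w (m+1)) := Finset.prod_range_succ _ _
      rw [h1]
      have h2 := mul_le_mul_of_nonneg_right ih (hC (w m) (w (m+1)))
      refine h2.trans ?_
      exact le_fsup (fun k => mtPow C m (w 0) k * C k (w (m+1))) (w m)

lemma pow_eq_pw (hn : 0 < n) (hC : ∀ i j, 0 ≤ C i j) :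
    ∀ m i j, mtPow C m i j = 0 ∨
      ∃ w : ℕ → Fin n, w 0 = i ∧ w m = j ∧ mtPow C m i j = pw C m w := by
  intro m
  induction m with
  | zero =>
      intro i j
      rcases eq_or_ne i j with h | h
      · exact Or.inr ⟨fun _ => i, rfl, h, by simp [mtPow, pw, h]⟩
      · exact Or.inl (by simp [mtPow, h])
  | succ m ih =>
      intro i j
      obtain ⟨k, hk⟩ := fsup_ex hn (fun k => mtPow C m i k * C k j)
      have hval : mtPow C (m+1) i j = mtPow C m i k * C k j := hk
      rcases ih i k with h0 | ⟨w, hw0, hwm, hwe⟩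
      · exact Or.inl (by rw [hval, h0, zero_mul])
      · refine Or.inr ⟨fun t => if t ≤ m then w t else j, by simp [hw0], by simp, ?_⟩
        have hpw : pw C (m+1) (fun t => if t ≤ m then w t else j)
            = pw C m w * C k j := by
          rw [pw, Finset.prod_range_succ]
          congr 1
          · refine Finset.prod_congr rfl fun u hu => ?_
            have hu' : u < m := Finset.mem_range.mp hu
            simp only [if_pos (by omega : u ≤ m), if_pos (by omega : u + 1 ≤ m)]
          · simp only [if_pos (le_refl m), if_neg (by omega : ¬ m + 1 ≤ m), hwm]
        rw [hval, hpw, hwe]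


lemma star_nonneg (hC : ∀ i j, 0 ≤ C i j) (i j : Fin n) : 0 ≤ kleeneStar C i j :=
  Stmt13Aux.fsup_nonneg fun m => pow_nonneg hC m.1 i j

lemma pow_le_star_of_lt (m : ℕ) (hm : m < n) (i j : Fin n) :
    mtPow C m i j ≤ kleeneStar C i j :=
  le_fsup (fun m' : Fin n => mtPow C m'.1 i j) ⟨m, hm⟩

lemma star_diag_ge_one (hn : 0 < n) (i : Fin n) : 1 ≤ kleeneStar C i i := by
  have := pow_le_star_of_lt (C := C) 0 hn i i
  simpa [mtPow] using this

/-- path decomposition / pigeonhole : every power is dominated by the Kleene star,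
provided all cycles have weight at most 1. -/
lemma pow_le_star (hn : 0 < n) (hC : ∀ i j, 0 ≤ C i j)
    (htr : ∀ k, 1 ≤ k → k ≤ n → mtTrace (mtPow C k) ≤ 1) :
    ∀ m i j, mtPow C m i j ≤ kleeneStar C i j := by
  intro m
  induction m using Nat.strong_induction_on with
  | _ m IH =>
  intro i j
  rcases Nat.lt_or_ge m n with hm | hm
  · exact pow_le_star_of_lt m hm i j
  rcases pow_eq_pw hn hC m i j with h0 | ⟨w, hw0, hwm, hwe⟩
  · rw [h0]; exact star_nonneg hC i j
  -- pigeonhole among w 0, ..., w n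
  have hinj : ¬ Function.Injective (fun t : Fin (n+1) => w t.1) := by
    intro hinj
    have := Fintype.card_le_of_injective _ hinj
    simp at this
  rw [Function.not_injective_iff] at hinj
  obtain ⟨s', t', hst, hne⟩ := hinj
  -- order them : s < t
  obtain ⟨s, t, hlt, heq⟩ : ∃ s t : ℕ, s < t ∧ t ≤ n ∧ w s = w t := by
    rcases lt_or_gt_of_ne (fun h => hne (Fin.ext h) : s'.1 ≠ t'.1) with h | h
    · exact ⟨s'.1, t'.1, h, by omega, hst⟩
    · exact ⟨t'.1, s'.1, h, by omega, hst.symm⟩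
  obtain ⟨htn, heq⟩ := heq
  set ℓ := t - s with hℓ
  have hℓ1 : 1 ≤ ℓ := by omega
  have hℓn : ℓ ≤ n := by omega
  have hℓm : ℓ ≤ m := by omega
  have hsml : s ≤ m - ℓ := by omega
  -- the shortened path
  set w' : ℕ → Fin n := fun u => if u ≤ s then w u else w (u + ℓ) with hw'
  have hw'0 : w' 0 = i := by simp [hw', hw0]
  have hw'end : w' (m - ℓ) = j := by
    rcases eq_or_lt_of_le hsml with h | h
    · have : w' (m - ℓ) = w s := by simp [hw', ← h]
      rw [this]
      have h2 : m = t := by omega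
      rw [heq, ← hwm, h2]
    · have : w' (m - ℓ) = w (m - ℓ + ℓ) := by
        simp [hw', if_neg (by omega : ¬ m - ℓ ≤ s)]
      rw [this, (by omega : m - ℓ + ℓ = m), hwm]
  -- decomposition of the weight
  set f : ℕ → ℝ := fun u => C (w u) (w (u+1)) with hf
  have hsplit : pw C m w = pw C (m - ℓ) w' * pw C ℓ (fun u => w (u + s)) := by
    have h1 : pw C m w = (∏ u ∈ Finset.Ico 0 s, f u) * (∏ u ∈ Finset.Ico s t, f u)
        * (∏ u ∈ Finset.Ico t m, f u) := by
      rw [pw, Finset.range_eq_Ico]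
      rw [← Finset.prod_Ico_consecutive f (by omega : 0 ≤ s) (by omega : s ≤ m)]
      rw [← Finset.prod_Ico_consecutive f (by omega : s ≤ t) (by omega : t ≤ m)]
      ring
    have h2 : pw C ℓ (fun u => w (u + s)) = ∏ u ∈ Finset.Ico s t, f u := by
      rw [pw, Finset.range_eq_Ico]
      have e1 : ∀ u ∈ Finset.Ico 0 ℓ,
          C (w (u + s)) (w (u + 1 + s)) = f (u + s) := by
        intro u _
        simp only [hf]
        exact congrArg (fun z => C (w (u + s)) (w z)) (by omega)
      rw [Finset.prod_congr rfl e1, Finset.prod_Ico_add' f 0 ℓ s]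
      rw [show (0 : ℕ) + s = s from by omega, show ℓ + s = t from by omega]
    have h3 : pw C (m - ℓ) w' = (∏ u ∈ Finset.Ico 0 s, f u) * (∏ u ∈ Finset.Ico t m, f u) := by
      rw [pw, Finset.range_eq_Ico,
        ← Finset.prod_Ico_consecutive _ (by omega : 0 ≤ s) (hsml : s ≤ m - ℓ)]
      congr 1
      · refine Finset.prod_congr rfl fun u hu => ?_
        have hu' : u < s := (Finset.mem_Ico.mp hu).2
        simp only [hw', hf]
        rw [if_pos (by omega : u ≤ s), if_pos (by omega : u + 1 ≤ s)]
      · have h4 : ∀ u ∈ Finset.Ico s (m - ℓ), C (w' u) (w' (u+1)) = f (u + ℓ) := by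
          intro u hu
          have hu' : s ≤ u := (Finset.mem_Ico.mp hu).1
          have hwu : w' u = w (u + ℓ) := by
            rcases eq_or_lt_of_le hu' with h | h
            · have e1 : w' u = w u := by
                simp only [hw']; rw [if_pos (by omega : u ≤ s)]
              rw [e1, ← h, heq]
              exact congrArg w (by omega)
            · simp only [hw']; rw [if_neg (by omega : ¬ u ≤ s)]
          rw [hwu]
          simp only [hw', hf]
          rw [if_neg (by omega : ¬ u + 1 ≤ s)]
          exact congrArg (fun z => C (w (u + ℓ)) (w z)) (by omega)
        rw [Finset.prod_congr rfl h4]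
        rw [Finset.prod_Ico_add' f s (m - ℓ) ℓ]
        rw [show s + ℓ = t from by omega, show m - ℓ + ℓ = m from by omega]
    rw [h1, h2, h3]; ring
  -- the cycle has weight ≤ 1
  have hcyc : pw C ℓ (fun u => w (u + s)) ≤ 1 := by
    have h1 := pw_le_pow hC ℓ (fun u => w (u + s))
    simp only [Nat.zero_add] at h1
    have h2 : w (ℓ + s) = w s := by rw [(by omega : ℓ + s = t), heq]
    rw [h2] at h1
    refine h1.trans ?_
    exact (le_fsup (fun i => mtPow C ℓ i i) (w s)).trans (htr ℓ hℓ1 hℓn)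
  have hshort : pw C (m - ℓ) w' ≤ kleeneStar C i j := by
    have := pw_le_pow hC (m - ℓ) w'
    rw [hw'0, hw'end] at this
    exact this.trans (IH (m - ℓ) (by omega) i j)
  calc mtPow C m i j = pw C m w := hwe
    _ = pw C (m - ℓ) w' * pw C ℓ (fun u => w (u + s)) := hsplit
    _ ≤ pw C (m - ℓ) w' * 1 := mul_le_mul_of_nonneg_left hcyc (pw_nonneg hC _ _)
    _ = pw C (m - ℓ) w' := mul_one _
    _ ≤ kleeneStar C i j := hshort

lemma star_mul_star (hn : 0 < n) (hC : ∀ i j, 0 ≤ C i j)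
    (htr : ∀ k, 1 ≤ k → k ≤ n → mtTrace (mtPow C k) ≤ 1) (i k j : Fin n) :
    kleeneStar C i k * kleeneStar C k j ≤ kleeneStar C i j := by
  obtain ⟨a, ha⟩ := fsup_ex hn (fun m : Fin n => mtPow C m.1 i k)
  obtain ⟨b, hb⟩ := fsup_ex hn (fun m : Fin n => mtPow C m.1 k j)
  show (⨆ m : Fin n, mtPow C m.1 i k) * (⨆ m : Fin n, mtPow C m.1 k j) ≤ _
  rw [ha, hb]
  exact (powmul hn hC b.1 a.1 i k j).trans (pow_le_star hn hC htr (a.1 + b.1) i j)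

/-- feasibility propagates to powers -/
lemma powx (hn : 0 < n) (hC : ∀ i j, 0 ≤ C i j) {x : Fin n → ℝ} (hx : ∀ i, 0 ≤ x i)
    (hfe : ∀ i, (⨆ j, C i j * x j) ≤ x i) :
    ∀ m i j, mtPow C m i j * x j ≤ x i := by
  intro m
  induction m with
  | zero =>
      intro i j
      show (if i = j then (1:ℝ) else 0) * x j ≤ x i
      rcases eq_or_ne i j with h | h
      · subst h; simp
      · simp [h, hx i]
  | succ m ih =>
      intro i j
      show (⨆ k, mtPow C m i k * C k j) * x j ≤ x i
      rw [Real.iSup_mul_of_nonneg (hx j)]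
      refine fsup_le hn fun k => ?_
      have h1 : mtPow C m i k * C k j * x j = mtPow C m i k * (C k j * x j) := by ring
      rw [h1]
      have h2 : C k j * x j ≤ x k := (le_fsup (fun j => C k j * x j) j).trans (hfe k)
      exact (mul_le_mul_of_nonneg_left h2 (pow_nonneg hC m i k)).trans (ih i k)

end Stmt13Aux


theorem stmt13 {n : ℕ} (hn : 0 < n) (A : Matrix (Fin n) (Fin n) ℝ)
    (hA : ∀ i j, 0 ≤ A i j) (hTr : mtTr A ≤ 1)
    (p : Fin n → ℝ) (hp : ∀ i, 0 ≤ p i) (hp0 : p ≠ 0)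
    (q : Fin n → ℝ) (hq : ∀ i, 0 < q i)
    (δ : ℝ) (hδ : δ = ⨆ i, ⨆ j, (q i)⁻¹ * kleeneStar A i j * p j)
    (M : Matrix (Fin n) (Fin n) ℝ)
    (hM : M = fun i j => max (δ⁻¹ * (p i / q j)) (A i j)) :
    IsLeast {v : ℝ | ∃ x : Fin n → ℝ, (∀ i, 0 < x i) ∧
        (∀ i, (⨆ j, A i j * x j) ≤ x i) ∧
        v = (⨆ i, x i / q i) * (⨆ j, p j / x j)} δ ∧
      ∀ x : Fin n → ℝ, (∀ i, 0 < x i) → (∀ i, (⨆ j, A i j * x j) ≤ x i) →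
        ((⨆ i, x i / q i) * (⨆ j, p j / x j) = δ ↔
          ∃ u : Fin n → ℝ, (∀ i, 0 < u i) ∧ x = mtMulVec (kleeneStar M) u) := by
  open Stmt13Aux in
  haveI : Nonempty (Fin n) := ⟨⟨0, hn⟩⟩
  have htrA : ∀ k, 1 ≤ k → k ≤ n → mtTrace (mtPow A k) ≤ 1 := by
    intro k hk1 hkn
    have h1 := le_fsup (fun m : Fin n => mtTrace (mtPow A (m.1 + 1))) ⟨k - 1, by omega⟩
    simp only at h1
    rw [show k - 1 + 1 = k from by omega] at h1
    exact h1.trans hTr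
  have hKnn : ∀ i j, 0 ≤ kleeneStar A i j := star_nonneg hA
  have hδub : ∀ i j, (q i)⁻¹ * kleeneStar A i j * p j ≤ δ := by
    intro i j
    rw [hδ]
    exact (le_fsup (fun j => (q i)⁻¹ * kleeneStar A i j * p j) j).trans
      (le_fsup (fun i => ⨆ j, (q i)⁻¹ * kleeneStar A i j * p j) i)
  have hδpos : 0 < δ := by
    obtain ⟨j, hj⟩ : ∃ j, p j ≠ 0 := Function.ne_iff.mp hp0
    have hpj : 0 < p j := lt_of_le_of_ne (hp j) (Ne.symm hj)
    calc (0:ℝ) < (q j)⁻¹ * 1 * p j :=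
        mul_pos (mul_pos (inv_pos.mpr (hq j)) one_pos) hpj
      _ ≤ (q j)⁻¹ * kleeneStar A j j * p j := by
          refine mul_le_mul_of_nonneg_right ?_ (hp j)
          exact mul_le_mul_of_nonneg_left (star_diag_ge_one hn j)
            (inv_nonneg.mpr (hq j).le)
      _ ≤ δ := hδub j j
  have hδ0 : δ ≠ 0 := hδpos.ne'
  have hMnn : ∀ i j, 0 ≤ M i j := by
    intro i j; simp only [hM]
    exact le_trans (hA i j) (le_max_right _ _)
  have hAM : ∀ i j, A i j ≤ M i j := by
    intro i j; simp only [hM]; exact le_max_right _ _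
  have hBM : ∀ i j, δ⁻¹ * (p i / q j) ≤ M i j := by
    intro i j; simp only [hM]; exact le_max_left _ _
  -- the Kleene star of A and related bounds
  have hKmul : ∀ i k j, kleeneStar A i k * kleeneStar A k j ≤ kleeneStar A i j :=
    star_mul_star hn hA htrA
  have hKge1 : ∀ i, (1:ℝ) ≤ kleeneStar A i i := fun i => star_diag_ge_one hn i
  have hApow_le : ∀ m i j, mtPow A m i j ≤ kleeneStar A i j := pow_le_star hn hA htrA
  have hA_le_K : ∀ i j, A i j ≤ kleeneStar A i j := by
    intro i j
    have := hApow_le 1 i j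
    rwa [pow_one_eq hn hA i j] at this
  -- the invariant S = Ks ⊔ T
  set T : Fin n → Fin n → ℝ :=
    fun i j => ⨆ s, ⨆ t, kleeneStar A i s * (δ⁻¹ * (p s / q t)) * kleeneStar A t j with hT
  have hterm_nn : ∀ i s t j, 0 ≤ kleeneStar A i s * (δ⁻¹ * (p s / q t)) * kleeneStar A t j := by
    intro i s t j
    exact mul_nonneg (mul_nonneg (hKnn i s)
      (mul_nonneg (inv_nonneg.mpr hδpos.le) (div_nonneg (hp s) (hq t).le))) (hKnn t j)
  have hTnn : ∀ i j, 0 ≤ T i j := fun i j =>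
    fsup_nonneg fun s => fsup_nonneg fun t => hterm_nn i s t j
  have hTle : ∀ s t i j, kleeneStar A i s * (δ⁻¹ * (p s / q t)) * kleeneStar A t j ≤ T i j := by
    intro s t i j
    exact (le_fsup (fun t => kleeneStar A i s * (δ⁻¹ * (p s / q t)) * kleeneStar A t j) t).trans
      (le_fsup (fun s => ⨆ t, kleeneStar A i s * (δ⁻¹ * (p s / q t)) * kleeneStar A t j) s)
  set S : Fin n → Fin n → ℝ := fun i j => max (kleeneStar A i j) (T i j) with hS
  have hSnn : ∀ i j, 0 ≤ S i j := fun i j => le_trans (hKnn i j) (le_max_left _ _)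
  have absorb : ∀ i h j, M i h * S h j ≤ S i j := by
    intro i h j
    have hMe : M i h = max (δ⁻¹ * (p i / q h)) (A i h) := by simp only [hM]
    rw [hMe, max_mul_of_nonneg _ _ (hSnn h j)]
    have hSe : S h j = max (kleeneStar A h j) (T h j) := rfl
    refine max_le ?_ ?_
    · -- B case
      rw [hSe, mul_max_of_nonneg _ _ (mul_nonneg (inv_nonneg.mpr hδpos.le)
          (div_nonneg (hp i) (hq h).le))]
      refine max_le ?_ ?_
      · -- B * Ks ≤ T
        refine le_trans ?_ (le_trans (hTle i h i j) (le_max_right _ _))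
        calc δ⁻¹ * (p i / q h) * kleeneStar A h j
            = 1 * (δ⁻¹ * (p i / q h) * kleeneStar A h j) := by ring
          _ ≤ kleeneStar A i i * (δ⁻¹ * (p i / q h) * kleeneStar A h j) :=
              mul_le_mul_of_nonneg_right (hKge1 i)
                (mul_nonneg (mul_nonneg (inv_nonneg.mpr hδpos.le)
                  (div_nonneg (hp i) (hq h).le)) (hKnn h j))
          _ = kleeneStar A i i * (δ⁻¹ * (p i / q h)) * kleeneStar A h j := by ring
      · -- B * T ≤ T
        rw [Real.mul_iSup_of_nonneg (mul_nonneg (inv_nonneg.mpr hδpos.le)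
          (div_nonneg (hp i) (hq h).le))]
        refine le_trans (fsup_le hn fun s => ?_) (le_max_right (kleeneStar A i j) (T i j))
        rw [Real.mul_iSup_of_nonneg (mul_nonneg (inv_nonneg.mpr hδpos.le)
          (div_nonneg (hp i) (hq h).le))]
        refine fsup_le hn fun t => ?_
        have key : (q h)⁻¹ * kleeneStar A h s * p s ≤ δ := hδub h s
        have e1 : δ⁻¹ * (p i / q h) * (kleeneStar A h s * (δ⁻¹ * (p s / q t)) * kleeneStar A t j)
            = (δ⁻¹ * (p i / q t) * kleeneStar A t j) * (δ⁻¹ * ((q h)⁻¹ * kleeneStar A h s * p s)) := by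
          rw [div_eq_mul_inv, div_eq_mul_inv, div_eq_mul_inv]; ring
        rw [e1]
        have h2 : δ⁻¹ * ((q h)⁻¹ * kleeneStar A h s * p s) ≤ 1 := by
          calc δ⁻¹ * ((q h)⁻¹ * kleeneStar A h s * p s) ≤ δ⁻¹ * δ :=
              mul_le_mul_of_nonneg_left key (inv_nonneg.mpr hδpos.le)
            _ = 1 := inv_mul_cancel₀ hδ0
        have h3 : (δ⁻¹ * (p i / q t) * kleeneStar A t j)
            * (δ⁻¹ * ((q h)⁻¹ * kleeneStar A h s * p s))
            ≤ (δ⁻¹ * (p i / q t) * kleeneStar A t j) * 1 :=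
          mul_le_mul_of_nonneg_left h2 (mul_nonneg (mul_nonneg (inv_nonneg.mpr hδpos.le)
            (div_nonneg (hp i) (hq t).le)) (hKnn t j))
        refine h3.trans ?_
        rw [mul_one]
        calc δ⁻¹ * (p i / q t) * kleeneStar A t j
            = 1 * (δ⁻¹ * (p i / q t) * kleeneStar A t j) := by ring
          _ ≤ kleeneStar A i i * (δ⁻¹ * (p i / q t) * kleeneStar A t j) :=
              mul_le_mul_of_nonneg_right (hKge1 i)
                (mul_nonneg (mul_nonneg (inv_nonneg.mpr hδpos.le)
                  (div_nonneg (hp i) (hq t).le)) (hKnn t j))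
          _ = kleeneStar A i i * (δ⁻¹ * (p i / q t)) * kleeneStar A t j := by ring
          _ ≤ T i j := hTle i t i j
    · -- A case
      rw [hSe, mul_max_of_nonneg _ _ (hA i h)]
      refine max_le ?_ ?_
      · -- A * Ks ≤ Ks
        refine le_trans ?_ (le_max_left (kleeneStar A i j) (T i j))
        exact (mul_le_mul_of_nonneg_right (hA_le_K i h) (hKnn h j)).trans (hKmul i h j)
      · -- A * T ≤ T
        rw [Real.mul_iSup_of_nonneg (hA i h)]
        refine le_trans (fsup_le hn fun s => ?_) (le_max_right (kleeneStar A i j) (T i j))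
        rw [Real.mul_iSup_of_nonneg (hA i h)]
        refine fsup_le hn fun t => ?_
        have e : A i h * (kleeneStar A h s * (δ⁻¹ * (p s / q t)) * kleeneStar A t j)
            = (A i h * kleeneStar A h s) * ((δ⁻¹ * (p s / q t)) * kleeneStar A t j) := by ring
        rw [e]
        have h1 : A i h * kleeneStar A h s ≤ kleeneStar A i s :=
          (mul_le_mul_of_nonneg_right (hA_le_K i h) (hKnn h s)).trans (hKmul i h s)
        have h2 := mul_le_mul_of_nonneg_right h1
          (mul_nonneg (mul_nonneg (inv_nonneg.mpr hδpos.le)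
            (div_nonneg (hp s) (hq t).le)) (hKnn t j))
        refine h2.trans ?_
        have e2 : kleeneStar A i s * ((δ⁻¹ * (p s / q t)) * kleeneStar A t j)
            = kleeneStar A i s * (δ⁻¹ * (p s / q t)) * kleeneStar A t j := by ring
        rw [e2]
        exact hTle s t i j
  -- pw over M is bounded by S
  have pw_le_S : ∀ m (w : ℕ → Fin n), pw M m w ≤ S (w 0) (w m) := by
    intro m
    induction m with
    | zero =>
        intro w
        have : pw M 0 w = 1 := by simp [pw]
        rw [this]
        exact le_trans (hKge1 (w 0)) (le_max_left _ _)
    | succ m ih =>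
        intro w
        have h1 : pw M (m+1) w = M (w 0) (w 1) * pw M m (fun t => w (t+1)) := by
          rw [pw, Finset.prod_range_succ', pw]
          exact mul_comm _ _
        rw [h1]
        have h2 := ih (fun t => w (t+1))
        have h3 := mul_le_mul_of_nonneg_left h2 (hMnn (w 0) (w 1))
        exact h3.trans (absorb (w 0) (w 1) (w (m+1)))
  have hKdiag : ∀ i, kleeneStar A i i ≤ 1 := by
    intro i
    refine fsup_le hn fun m => ?_
    rcases Nat.eq_zero_or_pos m.1 with h | h
    · simp [h, mtPow]
    · exact (le_fsup (fun i => mtPow A m.1 i i) i).trans (htrA m.1 h (by omega))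
  have hTdiag : ∀ i, T i i ≤ 1 := by
    intro i
    refine fsup_le hn fun s => fsup_le hn fun t => ?_
    have h1 : (q t)⁻¹ * (kleeneStar A t i * kleeneStar A i s) * p s
        ≤ (q t)⁻¹ * kleeneStar A t s * p s := by
      refine mul_le_mul_of_nonneg_right ?_ (hp s)
      exact mul_le_mul_of_nonneg_left (hKmul t i s) (inv_nonneg.mpr (hq t).le)
    have e : kleeneStar A i s * (δ⁻¹ * (p s / q t)) * kleeneStar A t i
        = δ⁻¹ * ((q t)⁻¹ * (kleeneStar A t i * kleeneStar A i s) * p s) := by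
      rw [div_eq_mul_inv]; ring
    rw [e]
    calc δ⁻¹ * ((q t)⁻¹ * (kleeneStar A t i * kleeneStar A i s) * p s)
        ≤ δ⁻¹ * δ := mul_le_mul_of_nonneg_left (h1.trans (hδub t s)) (inv_nonneg.mpr hδpos.le)
      _ = 1 := inv_mul_cancel₀ hδ0
  have htrM : ∀ k, 1 ≤ k → k ≤ n → mtTrace (mtPow M k) ≤ 1 := by
    intro k _ _
    refine fsup_le hn fun i => ?_
    rcases pow_eq_pw hn hMnn k i i with h0 | ⟨w, hw0, hwk, hwe⟩
    · rw [h0]; norm_num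
    · rw [hwe]
      have := pw_le_S k w
      rw [hw0, hwk] at this
      exact this.trans (max_le (hKdiag i) (hTdiag i))
  have hMpow_le : ∀ m i j, mtPow M m i j ≤ kleeneStar M i j := pow_le_star hn hMnn htrM
  have hMK : ∀ i j k, M i j * kleeneStar M j k ≤ kleeneStar M i k := by
    intro i j k
    obtain ⟨a, ha⟩ := fsup_ex hn (fun m : Fin n => mtPow M m.1 j k)
    show M i j * (⨆ m : Fin n, mtPow M m.1 j k) ≤ _
    rw [ha]
    have h1 : mtPow M 1 i j * mtPow M a.1 j k ≤ mtPow M (1 + a.1) i k :=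
      powmul hn hMnn a.1 1 i j k
    rw [pow_one_eq hn hMnn i j] at h1
    exact h1.trans (hMpow_le (1 + a.1) i k)
  -- properties of x = (kleeneStar M) u for positive u
  have main : ∀ u : Fin n → ℝ, (∀ i, 0 < u i) →
      (∀ i, 0 < mtMulVec (kleeneStar M) u i) ∧
      (∀ i, (⨆ j, M i j * mtMulVec (kleeneStar M) u j) ≤ mtMulVec (kleeneStar M) u i) := by
    intro u hu
    have hxpos : ∀ i, 0 < mtMulVec (kleeneStar M) u i := by
      intro i
      have h1 : kleeneStar M i i * u i ≤ mtMulVec (kleeneStar M) u i :=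
        le_fsup (fun j => kleeneStar M i j * u j) i
      have h2 : 0 < kleeneStar M i i * u i :=
        mul_pos (lt_of_lt_of_le one_pos (star_diag_ge_one hn i)) (hu i)
      exact h2.trans_le h1
    refine ⟨hxpos, fun i => fsup_le hn fun j => ?_⟩
    show M i j * (⨆ k, kleeneStar M j k * u k) ≤ _
    rw [Real.mul_iSup_of_nonneg (hMnn i j)]
    refine fsup_le hn fun k => ?_
    have e : M i j * (kleeneStar M j k * u k) = (M i j * kleeneStar M j k) * u k := by ring
    rw [e]
    exact (mul_le_mul_of_nonneg_right (hMK i j k) (hu k).le).trans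
      (le_fsup (fun k => kleeneStar M i k * u k) k)
  -- arithmetic helpers
  have ar1 : ∀ a b c d : ℝ, 0 < b → δ⁻¹ * (a / b) * c ≤ d → a * c ≤ δ * (b * d) := by
    intro a b c d hb h
    have hb0 : b ≠ 0 := hb.ne'
    have h2 := mul_le_mul_of_nonneg_left h (by positivity : (0:ℝ) ≤ δ * b)
    have e : δ * b * (δ⁻¹ * (a / b) * c) = a * c := by field_simp
    calc a * c = δ * b * (δ⁻¹ * (a / b) * c) := e.symm
      _ ≤ δ * b * d := h2
      _ = δ * (b * d) := by ring
  have ar2 : ∀ a b c d : ℝ, 0 < b → a * c ≤ δ * (b * d) → δ⁻¹ * (a / b) * c ≤ d := by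
    intro a b c d hb h
    have hb0 : b ≠ 0 := hb.ne'
    have h2 := mul_le_mul_of_nonneg_right h (by positivity : (0:ℝ) ≤ δ⁻¹ * b⁻¹)
    calc δ⁻¹ * (a / b) * c = a * c * (δ⁻¹ * b⁻¹) := by rw [div_eq_mul_inv]; ring
      _ ≤ δ * (b * d) * (δ⁻¹ * b⁻¹) := h2
      _ = d := by field_simp
  -- lower bound for any feasible x
  have hLB : ∀ x : Fin n → ℝ, (∀ i, 0 < x i) → (∀ i, (⨆ j, A i j * x j) ≤ x i) →
      δ ≤ (⨆ i, x i / q i) * (⨆ j, p j / x j) := by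
    intro x hx hfe
    rw [hδ]
    refine fsup_le hn fun i => fsup_le hn fun j => ?_
    obtain ⟨m, hm⟩ := fsup_ex hn (fun m : Fin n => mtPow A m.1 i j)
    have hK : kleeneStar A i j = mtPow A m.1 i j := hm
    have hxle : mtPow A m.1 i j * x j ≤ x i := powx hn hA (fun i => (hx i).le) hfe m.1 i j
    have h1 : (q i)⁻¹ * kleeneStar A i j * p j ≤ (x i / q i) * (p j / x j) := by
      rw [hK]
      have h2 : mtPow A m.1 i j ≤ x i / x j := (le_div_iff₀ (hx j)).mpr hxle
      calc (q i)⁻¹ * mtPow A m.1 i j * p j = (p j / q i) * mtPow A m.1 i j := by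
            rw [div_eq_mul_inv]; ring
        _ ≤ (p j / q i) * (x i / x j) :=
            mul_le_mul_of_nonneg_left h2 (div_nonneg (hp j) (hq i).le)
        _ = (x i / q i) * (p j / x j) := by
            rw [div_mul_div_comm, div_mul_div_comm]; ring
    refine h1.trans ?_
    have s1 : x i / q i ≤ ⨆ i, x i / q i := le_fsup (fun i => x i / q i) i
    have s2 : p j / x j ≤ ⨆ j, p j / x j := le_fsup (fun j => p j / x j) j
    exact mul_le_mul s1 s2 (div_nonneg (hp j) (hx j).le)
      (le_trans (div_nonneg (hx i).le (hq i).le) s1)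
  -- upper bound when δ⁻¹ p q⁻ x ≤ x
  have hUB : ∀ x : Fin n → ℝ, (∀ i, 0 < x i) →
      (∀ i j, δ⁻¹ * (p i / q j) * x j ≤ x i) →
      (⨆ i, x i / q i) * (⨆ j, p j / x j) ≤ δ := by
    intro x hx hB
    obtain ⟨i0, hi0⟩ := fsup_ex hn (fun i => x i / q i)
    obtain ⟨j0, hj0⟩ := fsup_ex hn (fun j => p j / x j)
    rw [hi0, hj0]
    have h1 : p j0 * x i0 ≤ δ * (q i0 * x j0) := ar1 _ _ _ _ (hq i0) (hB j0 i0)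
    rw [div_mul_div_comm, div_le_iff₀ (mul_pos (hq i0) (hx j0))]
    calc x i0 * p j0 = p j0 * x i0 := mul_comm _ _
      _ ≤ δ * (q i0 * x j0) := h1
  have hBofval : ∀ x : Fin n → ℝ, (∀ i, 0 < x i) →
      (⨆ i, x i / q i) * (⨆ j, p j / x j) = δ → ∀ i j, δ⁻¹ * (p i / q j) * x j ≤ x i := by
    intro x hx hval i j
    have h1 : (x j / q j) * (p i / x i) ≤ δ := by
      rw [← hval]
      exact mul_le_mul (le_fsup (fun k => x k / q k) j) (le_fsup (fun k => p k / x k) i)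
        (div_nonneg (hp i) (hx i).le)
        (fsup_nonneg fun k => div_nonneg (hx k).le (hq k).le)
    refine ar2 _ _ _ _ (hq j) ?_
    rw [div_mul_div_comm, div_le_iff₀ (mul_pos (hq j) (hx i))] at h1
    calc p i * x j = x j * p i := mul_comm _ _
      _ ≤ δ * (q j * x i) := h1
  -- x = (kleeneStar M) u is feasible and attains δ
  have hxval : ∀ u : Fin n → ℝ, (∀ i, 0 < u i) →
      (∀ i, 0 < mtMulVec (kleeneStar M) u i) ∧
      (∀ i, (⨆ j, A i j * mtMulVec (kleeneStar M) u j) ≤ mtMulVec (kleeneStar M) u i) ∧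
      (⨆ i, mtMulVec (kleeneStar M) u i / q i) *
        (⨆ j, p j / mtMulVec (kleeneStar M) u j) = δ := by
    intro u hu
    obtain ⟨hxpos, hMx⟩ := main u hu
    set x := mtMulVec (kleeneStar M) u with hxdef
    have hAx : ∀ i, (⨆ j, A i j * x j) ≤ x i := by
      intro i
      refine fsup_le hn fun j => ?_
      exact le_trans (mul_le_mul_of_nonneg_right (hAM i j) (hxpos j).le)
        ((le_fsup (fun j => M i j * x j) j).trans (hMx i))
    have hBx : ∀ i j, δ⁻¹ * (p i / q j) * x j ≤ x i := by
      intro i j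
      exact le_trans (mul_le_mul_of_nonneg_right (hBM i j) (hxpos j).le)
        ((le_fsup (fun j => M i j * x j) j).trans (hMx i))
    exact ⟨hxpos, hAx, le_antisymm (hUB x hxpos hBx) (hLB x hxpos hAx)⟩
  -- a feasible fixed point of M is its own star image
  have hfix : ∀ x : Fin n → ℝ, (∀ i, 0 < x i) → (∀ i, (⨆ j, M i j * x j) ≤ x i) →
      x = mtMulVec (kleeneStar M) x := by
    intro x hx hMx
    funext i
    refine le_antisymm ?_ ?_
    · refine le_trans ?_ (le_fsup (fun j => kleeneStar M i j * x j) i)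
      exact le_mul_of_one_le_left (hx i).le (star_diag_ge_one hn i)
    · refine fsup_le hn fun j => ?_
      show (⨆ m : Fin n, mtPow M m.1 i j) * x j ≤ x i
      rw [Real.iSup_mul_of_nonneg (hx j).le]
      refine fsup_le hn fun m => ?_
      exact powx hn hMnn (fun k => (hx k).le) hMx m.1 i j
  refine ⟨⟨?_, ?_⟩, ?_⟩
  · -- δ belongs to the set
    obtain ⟨hxpos, hAx, hval⟩ := hxval (fun _ => 1) (fun _ => one_pos)
    exact ⟨_, hxpos, hAx, hval.symm⟩
  · -- δ is a lower bound
    rintro v ⟨x, hxpos, hAx, rfl⟩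
    exact hLB x hxpos hAx
  · intro x hxpos hAx
    constructor
    · intro hval
      refine ⟨x, hxpos, ?_⟩
      refine hfix x hxpos fun i => fsup_le hn fun j => ?_
      have hB := hBofval x hxpos hval i j
      have e : M i j = max (δ⁻¹ * (p i / q j)) (A i j) := by simp only [hM]
      rw [e, max_mul_of_nonneg _ _ (hxpos j).le]
      exact max_le hB ((le_fsup (fun j => A i j * x j) j).trans (hAx i))
    · rintro ⟨u, hu, rfl⟩
      exact (hxval u hu).2.2
end
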